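/- arXiv:1210.4479 — 6 statements merged into one kernel-verified Lean document; each statement's English description precedes it below -/
import Mathlib

section
/- Let T be a complete first-order theory with monster model U, M a small model, and p a global M-invariant type. If p is not definable over M, then there exists a global type r, finitely satisfiable in M, such that p and r do not commute, i.e., p(x) ⊗ r(y) ≠ r(y) ⊗ p(x). -/
open FirstOrder FirstOrder.Language

namespace Paper

variable {L : Language} {U : Type*} [L.Structure U]

/-- `a` realizes the formula `φ(x; d)` where `d` is a tuple of parameters from `U`. -/
def Rz {γ : Type*} {n : ℕ} (a : γ → U) (φ : L.Formula (γ ⊕ Fin n)) (d : Fin n → U) : Prop :=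
  φ.Realize (Sum.elim a d)

/-- A global type over the monster `U` in variables `γ` : a complete, finitely
satisfiable set of formulas with parameters from `U` (given as explicit tuples). -/
structure GType (L : Language) (U : Type*) [L.Structure U] (γ : Type*) where
  mem : ∀ {n : ℕ}, L.Formula (γ ⊕ Fin n) → (Fin n → U) → Prop
  complete : ∀ {n : ℕ} (φ : L.Formula (γ ⊕ Fin n)) (d : Fin n → U), mem φ d ∨ mem φ.not d
  finSat : ∀ (s : List (Σ n : ℕ, L.Formula (γ ⊕ Fin n) × (Fin n → U))),
    (∀ x ∈ s, mem x.2.1 x.2.2) → ∃ a : γ → U, ∀ x ∈ s, Rz a x.2.1 x.2.2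

/-- `a ≡_A b` : same type over the parameter set `A`. -/
def SameTypeOver (A : Set U) {γ : Type*} (a b : γ → U) : Prop :=
  ∀ {j : ℕ} (ψ : L.Formula (γ ⊕ Fin j)) (e : Fin j → U), (∀ i, e i ∈ A) →
    (Rz a ψ e ↔ Rz b ψ e)

/-- A global type is `A`-invariant. -/
def Invariant (A : Set U) {γ : Type*} (p : GType L U γ) : Prop :=
  ∀ {n : ℕ} (φ : L.Formula (γ ⊕ Fin n)) (d d' : Fin n → U),
    SameTypeOver (L := L) A d d' → (p.mem φ d ↔ p.mem φ d')

/-- A global type is finitely satisfiable in `A` : every formula in it has a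
realization with coordinates from `A`. -/
def FinSatIn (A : Set U) {γ : Type*} (p : GType L U γ) : Prop :=
  ∀ {n : ℕ} (φ : L.Formula (γ ⊕ Fin n)) (d : Fin n → U), p.mem φ d →
    ∃ a : γ → U, (∀ i, a i ∈ A) ∧ Rz a φ d

/-- A global type is definable over `A`. -/
def DefinableOver (A : Set U) {γ : Type*} (p : GType L U γ) : Prop :=
  ∀ {n : ℕ} (φ : L.Formula (γ ⊕ Fin n)), ∃ (j : ℕ) (e : Fin j → U),
    (∀ i, e i ∈ A) ∧ ∃ ψ : L.Formula (Fin n ⊕ Fin j),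
      ∀ d : Fin n → U, (p.mem φ d ↔ ψ.Realize (Sum.elim d e))

/-- `a ⊨ p|_A` : the tuple `a` realizes the restriction of `p` to parameters in `A`. -/
def RealizesOver {γ : Type*} (p : GType L U γ) (a : γ → U) (A : Set U) : Prop :=
  ∀ {n : ℕ} (φ : L.Formula (γ ⊕ Fin n)) (d : Fin n → U), (∀ i, d i ∈ A) →
    p.mem φ d → Rz a φ d

/-- Substitute a tuple of parameters for the second variable block `y` of
`φ(x, y; z)`, producing a formula `φ(x; y⌢z)`. -/
def substY {m k n : ℕ} (φ : L.Formula ((Fin m ⊕ Fin k) ⊕ Fin n)) :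
    L.Formula (Fin m ⊕ Fin (k + n)) :=
  φ.relabel (Sum.elim (Sum.map id (Fin.castAdd n)) (fun j => Sum.inr (Fin.natAdd k j)))

/-- Substitute a tuple of parameters for the first variable block `x` of
`φ(x, y; z)`, producing a formula `φ(y; x⌢z)`. -/
def substX {m k n : ℕ} (φ : L.Formula ((Fin m ⊕ Fin k) ⊕ Fin n)) :
    L.Formula (Fin k ⊕ Fin (m + n)) :=
  φ.relabel (Sum.elim (Sum.elim (fun i => Sum.inr (Fin.castAdd n i)) Sum.inl)
    (fun j => Sum.inr (Fin.natAdd m j)))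

/-- Membership `φ(x,y;d) ∈ p(x) ⊗ q(y)` for an `A`-invariant type `p` :
for any `b ⊨ q|_{A ∪ d}` (in the monster), `φ(x, b; d) ∈ p`. -/
def ProdMem (A : Set U) {m k : ℕ} (p : GType L U (Fin m)) (q : GType L U (Fin k))
    {n : ℕ} (φ : L.Formula ((Fin m ⊕ Fin k) ⊕ Fin n)) (d : Fin n → U) : Prop :=
  ∀ b : Fin k → U, RealizesOver q b (A ∪ Set.range d) → p.mem (substY φ) (Fin.append b d)

/-- Membership `φ(x,y;d) ∈ q(y) ⊗ p(x)` (variables kept in the order `x, y`). -/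
def ProdMemRev (A : Set U) {m k : ℕ} (p : GType L U (Fin m)) (q : GType L U (Fin k))
    {n : ℕ} (φ : L.Formula ((Fin m ⊕ Fin k) ⊕ Fin n)) (d : Fin n → U) : Prop :=
  ∀ a : Fin m → U, RealizesOver p a (A ∪ Set.range d) → q.mem (substX φ) (Fin.append a d)

/-- `p ⊗ q = q ⊗ p` as global types. -/
def Commute (A : Set U) {m k : ℕ} (p : GType L U (Fin m)) (q : GType L U (Fin k)) : Prop :=
  ∀ {n : ℕ} (φ : L.Formula ((Fin m ⊕ Fin k) ⊕ Fin n)) (d : Fin n → U),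
    ProdMem A p q φ d ↔ ProdMemRev A p q φ d

/-- `(p ⊗ q)|_B = (q ⊗ p)|_B` : the products agree on parameters from `B`. -/
def CommuteOn (A B : Set U) {m k : ℕ} (p : GType L U (Fin m)) (q : GType L U (Fin k)) : Prop :=
  ∀ {n : ℕ} (φ : L.Formula ((Fin m ⊕ Fin k) ⊕ Fin n)) (d : Fin n → U), (∀ i, d i ∈ B) →
    (ProdMem A p q φ d ↔ ProdMemRev A p q φ d)

/-- A sequence of `k`-tuples indexed by a linear order is indiscernible over `A`. -/
def IndiscOver (A : Set U) {ι : Type*} [LinearOrder ι] {k : ℕ} (b : ι → Fin k → U) : Prop :=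
  ∀ (j r : ℕ) (ψ : L.Formula ((Fin j × Fin k) ⊕ Fin r)) (e : Fin r → U), (∀ i, e i ∈ A) →
    ∀ f g : Fin j → ι, StrictMono f → StrictMono g →
      (ψ.Realize (Sum.elim (fun v => b (f v.1) v.2) e) ↔
        ψ.Realize (Sum.elim (fun v => b (g v.1) v.2) e))

/-- Two sequences are mutually indiscernible over `A`. -/
def MutIndisc (A : Set U) {k₀ k₁ : ℕ} (I : ℕ → Fin k₀ → U) (J : ℕ → Fin k₁ → U) : Prop :=
  IndiscOver (L := L) (A ∪ ⋃ t, Set.range (J t)) I ∧ IndiscOver (L := L) (A ∪ ⋃ t, Set.range (I t)) J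

/-- The formula `φ(x; d)` divides over `A`. -/
def Divides (A : Set U) {γ : Type*} {n : ℕ} (φ : L.Formula (γ ⊕ Fin n)) (d : Fin n → U) : Prop :=
  ∃ I : ℕ → Fin n → U, I 0 = d ∧ IndiscOver (L := L) A I ∧ ¬ ∃ a : γ → U, ∀ t, Rz a φ (I t)

/-- The formula `φ(x; d)` forks over `A` : it implies a finite disjunction of
formulas dividing over `A`. -/
def Forks (A : Set U) {γ : Type*} {n : ℕ} (φ : L.Formula (γ ⊕ Fin n)) (d : Fin n → U) : Prop :=
  ∃ s : List (Σ m : ℕ, L.Formula (γ ⊕ Fin m) × (Fin m → U)),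
    (∀ x ∈ s, Divides A x.2.1 x.2.2) ∧
    ∀ a : γ → U, Rz a φ d → ∃ x ∈ s, Rz a x.2.1 x.2.2

/-- The (complete theory of the monster) is NIP : no formula has the independence property. -/
def IsNIP (L : Language) (U : Type*) [L.Structure U] : Prop :=
  ∀ (m n : ℕ) (φ : L.Formula (Fin m ⊕ Fin n)),
    ¬ ∃ (a : ℕ → Fin m → U) (b : Finset ℕ → Fin n → U),
      ∀ (i : ℕ) (s : Finset ℕ), (φ.Realize (Sum.elim (a i) (b s)) ↔ i ∈ s)

/-- dp-minimality : every singleton has dp-rank 1. -/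
def IsDpMinimal (L : Language) (U : Type*) [L.Structure U] : Prop :=
  ∀ (A : Set U) (c : U) {k₀ k₁ : ℕ} (I : ℕ → Fin k₀ → U) (J : ℕ → Fin k₁ → U),
    MutIndisc (L := L) A I J →
      IndiscOver (L := L) (A ∪ {c}) I ∨ IndiscOver (L := L) (A ∪ {c}) J

/-- Every type (set of formulas, in `k` free variables, with parameters from `A`)
which is finitely satisfiable in `U` is realized in `U`. -/
def RealizesTypesOver (L : Language) (U : Type*) [L.Structure U] (A : Set U) : Prop :=
  ∀ (k : ℕ) (S : Set (Σ n : ℕ, L.Formula (Fin k ⊕ Fin n) × (Fin n → U))),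
    (∀ x ∈ S, ∀ i, x.2.2 i ∈ A) →
    (∀ s : List (Σ n : ℕ, L.Formula (Fin k ⊕ Fin n) × (Fin n → U)),
      (∀ x ∈ s, x ∈ S) → ∃ a : Fin k → U, ∀ x ∈ s, Rz a x.2.1 x.2.2) →
    ∃ a : Fin k → U, ∀ x ∈ S, Rz a x.2.1 x.2.2

/-- Same, but the realization is found inside the set `N`. -/
def RealizesTypesOverIn (L : Language) (U : Type*) [L.Structure U] (A N : Set U) : Prop :=
  ∀ (k : ℕ) (S : Set (Σ n : ℕ, L.Formula (Fin k ⊕ Fin n) × (Fin n → U))),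
    (∀ x ∈ S, ∀ i, x.2.2 i ∈ A) →
    (∀ s : List (Σ n : ℕ, L.Formula (Fin k ⊕ Fin n) × (Fin n → U)),
      (∀ x ∈ s, x ∈ S) → ∃ a : Fin k → U, ∀ x ∈ s, Rz a x.2.1 x.2.2) →
    ∃ a : Fin k → U, (∀ i, a i ∈ N) ∧ ∀ x ∈ S, Rz a x.2.1 x.2.2

/-- `U` is a monster model relative to the small set `A` : it realizes all types
over `A` together with countably many extra parameters. -/
def Monster (L : Language) (U : Type*) [L.Structure U] (A : Set U) : Prop :=
  ∀ (e : ℕ → U), RealizesTypesOver L U (A ∪ Set.range e)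

/-- `M ≺⁺ N` (as subsets of the monster `U`) : `N` contains `M` and realizes (inside
itself) all types over `M` together with countably many extra parameters from `N`. -/
def SatPair (L : Language) (U : Type*) [L.Structure U] (M N : Set U) : Prop :=
  M ⊆ N ∧ ∀ (e : ℕ → U), (∀ i, e i ∈ N) → RealizesTypesOverIn L U (M ∪ Set.range e) N

end Paper


section Auxiliary
open Paper

variable {L : Language} {U : Type*} [L.Structure U] {γ : Type*}

lemma rz_not {n : ℕ} (a : γ → U) (φ : L.Formula (γ ⊕ Fin n)) (d : Fin n → U) :
    Rz a φ.not d ↔ ¬ Rz a φ d := by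
  simp [Rz, Formula.realize_not]

lemma aux_mem_mono (q : GType L U γ) {n n' : ℕ} (φ : L.Formula (γ ⊕ Fin n)) (d : Fin n → U)
    (ψ : L.Formula (γ ⊕ Fin n')) (e : Fin n' → U)
    (h : ∀ a : γ → U, Rz a φ d → Rz a ψ e) (hm : q.mem φ d) : q.mem ψ e := by
  by_contra hn
  have hnot : q.mem ψ.not e := by
    rcases q.complete ψ e with h' | h'
    · exact absurd h' hn
    · exact h'
  have hall : ∀ x ∈ [(⟨n, φ, d⟩ : Σ k : ℕ, L.Formula (γ ⊕ Fin k) × (Fin k → U)), ⟨n', ψ.not, e⟩],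
      q.mem x.2.1 x.2.2 := by
    intro x hx
    simp only [List.mem_cons, List.not_mem_nil, or_false] at hx
    rcases hx with rfl | rfl
    · exact hm
    · exact hnot
  obtain ⟨a, ha⟩ := q.finSat _ hall
  have h1 := ha ⟨n, φ, d⟩ (by simp)
  have h2 := ha ⟨n', ψ.not, e⟩ (by simp)
  exact (rz_not a ψ e).mp h2 (h a h1)

lemma aux_mem_congr (q : GType L U γ) {n n' : ℕ} (φ : L.Formula (γ ⊕ Fin n)) (d : Fin n → U)
    (ψ : L.Formula (γ ⊕ Fin n')) (e : Fin n' → U)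
    (h : ∀ a : γ → U, Rz a φ d ↔ Rz a ψ e) : q.mem φ d ↔ q.mem ψ e :=
  ⟨aux_mem_mono q φ d ψ e (fun a => (h a).mp), aux_mem_mono q ψ e φ d (fun a => (h a).mpr)⟩

/-- Conjunction of a finite list of formulas-with-parameters, as a single
formula-with-parameters. -/
lemma conj_list (A : Set U) :
    ∀ l : List (Σ j : ℕ, L.Formula (γ ⊕ Fin j) × (Fin j → U)),
      (∀ x ∈ l, ∀ i, x.2.2 i ∈ A) →
      ∃ (j : ℕ) (e : Fin j → U) (ψ : L.Formula (γ ⊕ Fin j)),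
        (∀ i, e i ∈ A) ∧ ∀ c : γ → U, (Rz c ψ e ↔ ∀ x ∈ l, Rz c x.2.1 x.2.2) := by
  intro l
  induction l with
  | nil =>
    intro _
    refine ⟨0, Fin.elim0, ⊤, (fun i => i.elim0), fun c => ?_⟩
    simp [Rz, Formula.Realize]
  | cons x l ih =>
    intro hA
    obtain ⟨j', e', ψ', hA', hiff⟩ := ih (fun y hy => hA y (List.mem_cons_of_mem _ hy))
    obtain ⟨jx, ψx, ex⟩ := x
    refine ⟨jx + j', Fin.append ex e',
      (ψx.relabel (Sum.map id (Fin.castAdd j'))) ⊓ (ψ'.relabel (Sum.map id (Fin.natAdd jx))),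
      ?_, ?_⟩
    · intro i
      refine Fin.addCases (fun i' => ?_) (fun i' => ?_) i
      · rw [Fin.append_left]
        exact hA ⟨jx, ψx, ex⟩ List.mem_cons_self i'
      · rw [Fin.append_right]
        exact hA' i'
    · intro c
      have h1 : Sum.elim c (Fin.append ex e') ∘ (Sum.map id (Fin.castAdd j')) = Sum.elim c ex := by
        funext z; rcases z with z | z <;> simp [Fin.append_left]
      have h2 : Sum.elim c (Fin.append ex e') ∘ (Sum.map id (Fin.natAdd jx)) = Sum.elim c e' := by
        funext z; rcases z with z | z <;> simp [Fin.append_right]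
      rw [Rz]
      rw [show ((ψx.relabel (Sum.map id (Fin.castAdd j'))) ⊓
          (ψ'.relabel (Sum.map id (Fin.natAdd jx)))).Realize (Sum.elim c (Fin.append ex e')) ↔
          (ψx.relabel (Sum.map id (Fin.castAdd j'))).Realize (Sum.elim c (Fin.append ex e')) ∧
          (ψ'.relabel (Sum.map id (Fin.natAdd jx))).Realize (Sum.elim c (Fin.append ex e'))
        from BoundedFormula.realize_inf]
      rw [Formula.realize_relabel, Formula.realize_relabel, h1, h2]
      simp only [List.forall_mem_cons]
      exact and_congr (Iff.rfl) (hiff c)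

lemma list_inter_mem {α : Type*} {ι : Type*} (𝒰 : Ultrafilter α) :
    ∀ (s : List ι) (S : ι → Set α), (∀ x ∈ s, S x ∈ 𝒰) → {a | ∀ x ∈ s, a ∈ S x} ∈ 𝒰 := by
  intro s S
  induction s with
  | nil =>
    intro _
    have h : {a : α | ∀ x ∈ ([] : List ι), a ∈ S x} = Set.univ := by ext a; simp
    rw [h]; exact Filter.univ_mem
  | cons x s ih =>
    intro h
    have he : {a | ∀ y ∈ x :: s, a ∈ S y} = S x ∩ {a | ∀ y ∈ s, a ∈ S y} := by
      ext a; simp [List.forall_mem_cons]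
    rw [he]
    exact Filter.inter_mem (h x List.mem_cons_self)
      (ih (fun y hy => h y (List.mem_cons_of_mem _ hy)))

def SubB (A : Set U) (n : ℕ) := {b : Fin n → U // ∀ i, b i ∈ A}

def SBset {L : Language} {U : Type*} [L.Structure U] (A : Set U) (n : ℕ) {j : ℕ}
    (ψ : L.Formula (Fin n ⊕ Fin j)) (e : Fin j → U) : Set (SubB A n) :=
  {b | Rz b.1 ψ e}

lemma SBset_not (A : Set U) (n : ℕ) {j : ℕ} (ψ : L.Formula (Fin n ⊕ Fin j)) (e : Fin j → U) :
    SBset A n ψ.not e = (SBset A n ψ e)ᶜ := by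
  ext b; simp [SBset, rz_not]

def UFtype (A : Set U) (n : ℕ) (𝒰 : Ultrafilter (SubB A n)) : GType L U (Fin n) where
  mem := fun {j} ψ c => SBset A n ψ c ∈ 𝒰
  complete := fun ψ c => by
    by_cases h : SBset A n ψ c ∈ 𝒰
    · exact Or.inl h
    · exact Or.inr (by
        show SBset A n ψ.not c ∈ 𝒰
        rw [SBset_not]; exact (Ultrafilter.compl_mem_iff_notMem).2 h)
  finSat := fun s hs => by
    have hm := list_inter_mem 𝒰 s (fun x => SBset A n x.2.1 x.2.2) hs
    obtain ⟨b, hb⟩ := Ultrafilter.nonempty_of_mem hm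
    exact ⟨b.1, hb⟩

lemma UFtype_mem (A : Set U) (n : ℕ) (𝒰 : Ultrafilter (SubB A n)) {j : ℕ}
    (ψ : L.Formula (Fin n ⊕ Fin j)) (c : Fin j → U) :
    (UFtype A n 𝒰).mem ψ c ↔ SBset A n ψ c ∈ 𝒰 := Iff.rfl

lemma elem_witness (M : L.ElementarySubstructure U) {n j : ℕ}
    (ψ : L.Formula (Fin n ⊕ Fin j)) (e : Fin j → U) (he : ∀ i, e i ∈ (M : Set U))
    (d : Fin n → U) (hd : Rz d ψ e) :
    ∃ b : Fin n → U, (∀ i, b i ∈ (M : Set U)) ∧ Rz b ψ e := by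
  classical
  let f : (Fin n ⊕ Fin j) → (Fin j ⊕ Fin n) := Sum.elim Sum.inr Sum.inl
  let eS : Fin j → M := fun i => ⟨e i, by simpa using he i⟩
  have hσU : ((ψ.relabel f).iExs (Fin n)).Realize e := by
    rw [Formula.realize_iExs]
    refine ⟨d, ?_⟩
    rw [Formula.realize_relabel]
    have h : (fun a => Sum.elim e d (f a)) = Sum.elim d e := by
      funext a; rcases a with a | a <;> rfl
    rw [Function.comp_def, h]; exact hd
  have hσM : ((ψ.relabel f).iExs (Fin n)).Realize eS := by
    refine (M.subtype.map_formula ((ψ.relabel f).iExs (Fin n)) eS).mp ?_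
    have h : (⇑M.subtype) ∘ eS = e := funext fun i => rfl
    rw [h]; exact hσU
  rw [Formula.realize_iExs] at hσM
  obtain ⟨dS, hdS⟩ := hσM
  rw [Formula.realize_relabel, Function.comp_def] at hdS
  have hb : ψ.Realize ((⇑M.subtype) ∘ (fun a => Sum.elim eS dS (f a))) :=
    (M.subtype.map_formula ψ _).mpr hdS
  have h : (⇑M.subtype) ∘ (fun a => Sum.elim eS dS (f a))
      = Sum.elim (fun i => ((dS i : U))) e := by
    funext a; rcases a with a | a <;> rfl
  rw [h] at hb
  exact ⟨fun i => (dS i : U), fun i => by simpa using (dS i).2, hb⟩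

end Auxiliary

open Paper in
/-- If a global `M`-invariant type `p` (over the monster `U`, `M` a small
model) is not definable over `M`, then there is a global type `r` finitely satisfiable
in `M` which does not commute with `p`. -/
theorem stmt_0 {L : Language} {U : Type*} [L.Structure U]
    (M : L.ElementarySubstructure U) (hmon : Monster L U (M : Set U))
    {m : ℕ} (p : GType L U (Fin m)) (hinv : Invariant (M : Set U) p)
    (hnotdef : ¬ DefinableOver (M : Set U) p) :
    ∃ (k : ℕ) (r : GType L U (Fin k)), FinSatIn (M : Set U) r ∧
      ¬ Commute (M : Set U) p r := by
  classical
  by_cases hU : Nonempty U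
  case neg =>
    exfalso
    apply hnotdef
    intro n φ
    rcases n with _ | n'
    · by_cases hp : p.mem φ Fin.elim0
      · refine ⟨0, Fin.elim0, fun i => i.elim0, ⊤, fun d => ?_⟩
        have hd : d = Fin.elim0 := funext fun i => i.elim0
        subst hd
        simp [Formula.Realize, hp]
      · refine ⟨0, Fin.elim0, fun i => i.elim0, ⊥, fun d => ?_⟩
        have hd : d = Fin.elim0 := funext fun i => i.elim0
        subst hd
        simp [Formula.Realize, hp]
    · refine ⟨0, Fin.elim0, fun i => i.elim0, ⊤, fun d => ?_⟩
      exact absurd (⟨d 0⟩ : Nonempty U) hU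
  obtain ⟨u₀⟩ := hU
  haveI : Nonempty U := ⟨u₀⟩
  by_contra hgoal
  push_neg at hgoal
  have H : ∀ (k : ℕ) (r : GType L U (Fin k)), FinSatIn (M : Set U) r →
      Commute (M : Set U) p r := hgoal
  clear hgoal
  apply hnotdef
  intro n φ
  -- a realization of `p` restricted to `M`
  obtain ⟨a₀, ha₀⟩ := hmon (fun _ => u₀) m
      {x : Σ j : ℕ, L.Formula (Fin m ⊕ Fin j) × (Fin j → U) |
        (∀ i, x.2.2 i ∈ (M : Set U)) ∧ p.mem x.2.1 x.2.2}
      (fun x hx i => Set.mem_union_left _ (hx.1 i))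
      (fun s hs => p.finSat s (fun x hx => (hs x hx).2))
  have ha₀M : ∀ {j : ℕ} (ψ : L.Formula (Fin m ⊕ Fin j)) (c : Fin j → U),
      (∀ i, c i ∈ (M : Set U)) → p.mem ψ c → Rz a₀ ψ c :=
    fun {j} ψ c hc hm => ha₀ ⟨j, ψ, c⟩ ⟨hc, hm⟩
  have ha₀R : RealizesOver p a₀ ((M : Set U) ∪ Set.range (Fin.elim0 : Fin 0 → U)) := by
    intro j ψ c hc hm
    exact ha₀M ψ c (fun i => by simpa using hc i) hm
  -- semantic computations for the product formulas
  have hsem1 : ∀ (b : Fin n → U) (a : Fin m → U),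
      Rz a (substY (φ.relabel Sum.inl)) (Fin.append b (Fin.elim0 : Fin 0 → U)) ↔ Rz a φ b := by
    intro b a
    simp only [Rz, substY, Formula.realize_relabel]
    have h : ((Sum.elim a (Fin.append b (Fin.elim0 : Fin 0 → U)) ∘
        Sum.elim (Sum.map id (Fin.castAdd 0)) fun j => Sum.inr (Fin.natAdd n j)) ∘ Sum.inl)
        = Sum.elim a b := by
      funext z
      rcases z with z | z <;> simp [Fin.append_left, Function.comp]
    rw [h]
  have hsem2 : ∀ (a : Fin m → U) (b : Fin n → U),
      Rz b (substX (φ.relabel Sum.inl)) (Fin.append a (Fin.elim0 : Fin 0 → U)) ↔ Rz a φ b := by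
    intro a b
    simp only [Rz, substX, Formula.realize_relabel]
    have h : ((Sum.elim b (Fin.append a (Fin.elim0 : Fin 0 → U)) ∘
        Sum.elim (Sum.elim (fun i => Sum.inr (Fin.castAdd 0 i)) Sum.inl)
          fun j => Sum.inr (Fin.natAdd m j)) ∘ Sum.inl)
        = Sum.elim a b := by
      funext z
      rcases z with z | z <;> simp [Fin.append_left, Function.comp]
    rw [h]
  have hmem1 : ∀ b : Fin n → U,
      p.mem (substY (φ.relabel Sum.inl)) (Fin.append b (Fin.elim0 : Fin 0 → U)) ↔ p.mem φ b :=
    fun b => aux_mem_congr p _ _ _ _ (fun a => hsem1 b a)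
  have hRA : ∀ a : Fin m → U,
      RealizesOver p a ((M : Set U) ∪ Set.range (Fin.elim0 : Fin 0 → U)) →
      ∀ b : SubB (M : Set U) n, (Rz a φ b.1 ↔ p.mem φ b.1) := by
    intro a ha b
    constructor
    · intro hr
      rcases p.complete φ b.1 with h | h
      · exact h
      · exfalso
        have hn := ha φ.not b.1 (fun i => Set.mem_union_left _ (b.2 i)) h
        exact (rz_not a φ b.1).mp hn hr
    · intro h
      exact ha φ b.1 (fun i => Set.mem_union_left _ (b.2 i)) h
  have hsetX : ∀ a : Fin m → U,
      RealizesOver p a ((M : Set U) ∪ Set.range (Fin.elim0 : Fin 0 → U)) →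
      SBset (M : Set U) n (substX (φ.relabel Sum.inl)) (Fin.append a Fin.elim0)
        = {b : SubB (M : Set U) n | p.mem φ b.1} := by
    intro a ha
    ext b
    show Rz b.1 (substX (φ.relabel Sum.inl)) (Fin.append a Fin.elim0) ↔ p.mem φ b.1
    rw [hsem2 a b.1]
    exact hRA a ha b
  -- the key consequence of commutation
  have keyC : ∀ (𝒰 : Ultrafilter (SubB (M : Set U) n)) (bs : Fin n → U),
      (∀ (j : ℕ) (ψ : L.Formula (Fin n ⊕ Fin j)) (c : Fin j → U), (∀ i, c i ∈ (M : Set U)) →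
        SBset (M : Set U) n ψ c ∈ 𝒰 → Rz bs ψ c) →
      (p.mem φ bs ↔ {b : SubB (M : Set U) n | p.mem φ b.1} ∈ 𝒰) := by
    intro 𝒰 bs hbs
    have hfs : FinSatIn (M : Set U) (UFtype (L := L) (M : Set U) n 𝒰) := by
      intro j ψ c h
      obtain ⟨b, hb⟩ := Ultrafilter.nonempty_of_mem ((UFtype_mem (M : Set U) n 𝒰 ψ c).mp h)
      exact ⟨b.1, b.2, hb⟩
    have hcom := H n (UFtype (L := L) (M : Set U) n 𝒰) hfs (φ.relabel Sum.inl) (Fin.elim0 : Fin 0 → U)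
    constructor
    · intro hpm
      have hPM : ProdMem (M : Set U) p (UFtype (L := L) (M : Set U) n 𝒰) (φ.relabel Sum.inl)
          Fin.elim0 := by
        intro b hb
        refine (hmem1 b).mpr ?_
        have hst : SameTypeOver (L := L) (M : Set U) bs b := by
          intro j ψ e he
          by_cases hS : SBset (M : Set U) n ψ e ∈ 𝒰
          · exact iff_of_true (hbs j ψ e he hS)
              (hb ψ e (fun i => Set.mem_union_left _ (he i)) hS)
          · have hS' : SBset (M : Set U) n ψ.not e ∈ 𝒰 := by
              rw [SBset_not]; exact Ultrafilter.compl_mem_iff_notMem.2 hS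
            exact iff_of_false
              (fun hr => (rz_not bs ψ e).mp (hbs j ψ.not e he hS') hr)
              (fun hr => (rz_not b ψ e).mp
                (hb ψ.not e (fun i => Set.mem_union_left _ (he i)) hS') hr)
        exact (hinv φ bs b hst).mp hpm
      have h1 := (hcom.mp hPM) a₀ ha₀R
      rw [UFtype_mem, hsetX a₀ ha₀R] at h1
      exact h1
    · intro hX
      have hPMR : ProdMemRev (M : Set U) p (UFtype (L := L) (M : Set U) n 𝒰) (φ.relabel Sum.inl)
          Fin.elim0 := by
        intro a ha
        rw [UFtype_mem, hsetX a ha]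
        exact hX
      have hbr : RealizesOver (UFtype (L := L) (M : Set U) n 𝒰) bs
          ((M : Set U) ∪ Set.range (Fin.elim0 : Fin 0 → U)) := by
        intro j ψ c hc hm
        exact hbs j ψ c (fun i => by simpa using hc i) hm
      exact (hmem1 bs).mp ((hcom.mpr hPMR) bs hbr)
  -- building ultrafilters converging to a given tuple
  have limext : ∀ (bs : Fin n → U) (Z : Set (SubB (M : Set U) n)),
      (∀ (j : ℕ) (ψ : L.Formula (Fin n ⊕ Fin j)) (e : Fin j → U), (∀ i, e i ∈ (M : Set U)) →
        Rz bs ψ e → (SBset (M : Set U) n ψ e ∩ Z).Nonempty) →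
      ∃ 𝒱 : Ultrafilter (SubB (M : Set U) n), Z ∈ 𝒱 ∧
        ∀ (j : ℕ) (ψ : L.Formula (Fin n ⊕ Fin j)) (e : Fin j → U), (∀ i, e i ∈ (M : Set U)) →
          SBset (M : Set U) n ψ e ∈ 𝒱 → Rz bs ψ e := by
    intro bs Z hZ
    set G : Set (Set (SubB (M : Set U) n)) :=
      insert Z {S | ∃ (j : ℕ) (ψ : L.Formula (Fin n ⊕ Fin j)) (e : Fin j → U),
        (∀ i, e i ∈ (M : Set U)) ∧ Rz bs ψ e ∧ S = SBset (M : Set U) n ψ e} with hG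
    have key : ∀ t : Set (Set (SubB (M : Set U) n)), t.Finite → t ⊆ G →
        ∃ (j : ℕ) (ψ : L.Formula (Fin n ⊕ Fin j)) (e : Fin j → U),
          (∀ i, e i ∈ (M : Set U)) ∧ Rz bs ψ e ∧ SBset (M : Set U) n ψ e ∩ Z ⊆ ⋂₀ t := by
      intro t htf
      refine Set.Finite.induction_on t htf ?_ ?_
      · intro _
        refine ⟨0, ⊤, Fin.elim0, fun i => i.elim0, ?_, by simp⟩
        simp [Rz, Formula.Realize]
      · intro S t' hS htf' ih hsub
        obtain ⟨j', ψ', e', he', hr', hsub'⟩ := ih (fun y hy => hsub (Set.mem_insert_of_mem _ hy))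
        rcases Set.mem_insert_iff.mp (hsub (Set.mem_insert _ _)) with hSZ | hSB
        · refine ⟨j', ψ', e', he', hr', ?_⟩
          intro b hb
          rw [Set.sInter_insert]
          exact ⟨by rw [hSZ]; exact hb.2, hsub' hb⟩
        · obtain ⟨jS, ψS, eS, heS, hrS, rfl⟩ := hSB
          obtain ⟨J, E, Ψ, hE, hIff⟩ := conj_list (M : Set U) [⟨jS, ψS, eS⟩, ⟨j', ψ', e'⟩]
            (by intro x hx
                simp only [List.mem_cons, List.not_mem_nil, or_false] at hx
                rcases hx with rfl | rfl
                · exact heS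
                · exact he')
          refine ⟨J, Ψ, E, hE, ?_, ?_⟩
          · refine (hIff bs).mpr ?_
            intro x hx
            simp only [List.mem_cons, List.not_mem_nil, or_false] at hx
            rcases hx with rfl | rfl
            · exact hrS
            · exact hr'
          · intro b hb
            have h2 := (hIff b.1).mp hb.1
            rw [Set.sInter_insert]
            refine ⟨h2 ⟨jS, ψS, eS⟩ (by simp), hsub' ⟨h2 ⟨j', ψ', e'⟩ (by simp), hb.2⟩⟩
    have hne : (Filter.generate G).NeBot := by
      rw [Filter.generate_neBot_iff]
      intro t hts htf
      obtain ⟨j, ψ, e, he, hr, hsub⟩ := key t htf hts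
      obtain ⟨b, hb⟩ := hZ j ψ e he hr
      exact ⟨b, hsub hb⟩
    obtain ⟨𝒱, h𝒱⟩ := Ultrafilter.exists_le (Filter.generate G)
    have hmem : ∀ S ∈ G, S ∈ 𝒱 := fun S hS => h𝒱 (Filter.mem_generate_of_mem hS)
    refine ⟨𝒱, hmem Z (Set.mem_insert _ _), ?_⟩
    intro j ψ e he hS
    by_contra hnr
    have hr' : Rz bs ψ.not e := (rz_not bs ψ e).mpr hnr
    have h1 : SBset (M : Set U) n ψ.not e ∈ 𝒱 :=
      hmem _ (Set.mem_insert_of_mem _ ⟨j, ψ.not, e, he, hr', rfl⟩)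
    rw [SBset_not] at h1
    exact (Ultrafilter.compl_mem_iff_notMem.mp h1) hS
  -- Step 1 : the `p`-definition of `φ` is given by a formula on tuples from `M`
  have step1 : ∃ (j : ℕ) (e : Fin j → U) (ψ : L.Formula (Fin n ⊕ Fin j)),
      (∀ i, e i ∈ (M : Set U)) ∧
      ∀ b : SubB (M : Set U) n, (p.mem φ b.1 ↔ Rz b.1 ψ e) := by
    by_contra hno
    set X : Set (SubB (M : Set U) n) := {b | p.mem φ b.1} with hXdef
    set F : Set (Set (SubB (M : Set U) n)) :=
      {S | ∃ (j : ℕ) (ψ : L.Formula (Fin n ⊕ Fin j)) (e : Fin j → U),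
        (∀ i, e i ∈ (M : Set U)) ∧ S = SBset (M : Set U) n ψ e ∧ (X ⊆ S ∨ Xᶜ ⊆ S)} with hF
    have key : ∀ t : Set (Set (SubB (M : Set U) n)), t.Finite → t ⊆ F →
        ∃ (jF : ℕ) (ψF : L.Formula (Fin n ⊕ Fin jF)) (eF : Fin jF → U)
          (jG : ℕ) (ψG : L.Formula (Fin n ⊕ Fin jG)) (eG : Fin jG → U),
          (∀ i, eF i ∈ (M : Set U)) ∧ (∀ i, eG i ∈ (M : Set U)) ∧
          X ⊆ SBset (M : Set U) n ψF eF ∧ Xᶜ ⊆ SBset (M : Set U) n ψG eG ∧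
          SBset (M : Set U) n ψF eF ∩ SBset (M : Set U) n ψG eG ⊆ ⋂₀ t := by
      intro t htf
      refine Set.Finite.induction_on t htf ?_ ?_
      · intro _
        refine ⟨0, ⊤, Fin.elim0, 0, ⊤, Fin.elim0, fun i => i.elim0, fun i => i.elim0,
          ?_, ?_, by simp⟩
        · intro b _
          show Rz b.1 ⊤ Fin.elim0
          simp [Rz, Formula.Realize]
        · intro b _
          show Rz b.1 ⊤ Fin.elim0
          simp [Rz, Formula.Realize]
      · intro S t' hS htf' ih hsub
        obtain ⟨jF, ψF, eF, jG, ψG, eG, hEF, hEG, hXF, hXG, hsub'⟩ :=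
          ih (fun y hy => hsub (Set.mem_insert_of_mem _ hy))
        obtain ⟨jS, ψS, eS, heS, rfl, hside⟩ := hsub (Set.mem_insert _ _)
        rcases hside with hsideF | hsideG
        · obtain ⟨J, E, Ψ, hE, hIff⟩ := conj_list (M : Set U) [⟨jS, ψS, eS⟩, ⟨jF, ψF, eF⟩]
            (by intro x hx
                simp only [List.mem_cons, List.not_mem_nil, or_false] at hx
                rcases hx with rfl | rfl
                · exact heS
                · exact hEF)
          refine ⟨J, Ψ, E, jG, ψG, eG, hE, hEG, ?_, hXG, ?_⟩
          · intro b hb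
            show Rz b.1 Ψ E
            refine (hIff b.1).mpr ?_
            intro x hx
            simp only [List.mem_cons, List.not_mem_nil, or_false] at hx
            rcases hx with rfl | rfl
            · exact hsideF hb
            · exact hXF hb
          · intro b hb
            have h2 := (hIff b.1).mp hb.1
            rw [Set.sInter_insert]
            refine ⟨h2 ⟨jS, ψS, eS⟩ (by simp), hsub' ⟨h2 ⟨jF, ψF, eF⟩ (by simp), hb.2⟩⟩
        · obtain ⟨J, E, Ψ, hE, hIff⟩ := conj_list (M : Set U) [⟨jS, ψS, eS⟩, ⟨jG, ψG, eG⟩]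
            (by intro x hx
                simp only [List.mem_cons, List.not_mem_nil, or_false] at hx
                rcases hx with rfl | rfl
                · exact heS
                · exact hEG)
          refine ⟨jF, ψF, eF, J, Ψ, E, hEF, hE, hXF, ?_, ?_⟩
          · intro b hb
            show Rz b.1 Ψ E
            refine (hIff b.1).mpr ?_
            intro x hx
            simp only [List.mem_cons, List.not_mem_nil, or_false] at hx
            rcases hx with rfl | rfl
            · exact hsideG hb
            · exact hXG hb
          · intro b hb
            have h2 := (hIff b.1).mp hb.2
            rw [Set.sInter_insert]
            refine ⟨h2 ⟨jS, ψS, eS⟩ (by simp), hsub' ⟨hb.1, h2 ⟨jG, ψG, eG⟩ (by simp)⟩⟩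
    have hne : (Filter.generate F).NeBot := by
      rw [Filter.generate_neBot_iff]
      intro t hts htf
      obtain ⟨jF, ψF, eF, jG, ψG, eG, hEF, hEG, hXF, hXG, hsub⟩ := key t htf hts
      rcases Set.eq_empty_or_nonempty
        (SBset (M : Set U) n ψF eF ∩ SBset (M : Set U) n ψG eG) with hcap | hcap
      · exfalso
        apply hno
        refine ⟨jF, eF, ψF, hEF, ?_⟩
        intro b
        constructor
        · intro h
          exact hXF (show b ∈ X from h)
        · intro h
          by_contra hnp
          have hbG : b ∈ SBset (M : Set U) n ψG eG := hXG (show b ∈ Xᶜ from hnp)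
          have hmem : b ∈ (∅ : Set (SubB (M : Set U) n)) :=
            hcap ▸ (⟨h, hbG⟩ : b ∈ SBset (M : Set U) n ψF eF ∩ SBset (M : Set U) n ψG eG)
          exact hmem
      · obtain ⟨b, hb⟩ := hcap
        exact ⟨b, hsub hb⟩
    obtain ⟨𝒰, h𝒰⟩ := Ultrafilter.exists_le (Filter.generate F)
    have hmemF : ∀ S ∈ F, S ∈ 𝒰 := fun S hS => h𝒰 (Filter.mem_generate_of_mem hS)
    obtain ⟨bs, hbs⟩ := hmon (fun _ => u₀) n
      {x : Σ j : ℕ, L.Formula (Fin n ⊕ Fin j) × (Fin j → U) |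
        (∀ i, x.2.2 i ∈ (M : Set U)) ∧ SBset (M : Set U) n x.2.1 x.2.2 ∈ 𝒰}
      (fun x hx i => Set.mem_union_left _ (hx.1 i))
      (fun s hs => by
        have hm := list_inter_mem 𝒰 s (fun x => SBset (M : Set U) n x.2.1 x.2.2)
          (fun x hx => (hs x hx).2)
        obtain ⟨b, hb⟩ := Ultrafilter.nonempty_of_mem hm
        exact ⟨b.1, hb⟩)
    have hbsl : ∀ (j : ℕ) (ψ : L.Formula (Fin n ⊕ Fin j)) (e : Fin j → U),
        (∀ i, e i ∈ (M : Set U)) → SBset (M : Set U) n ψ e ∈ 𝒰 → Rz bs ψ e :=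
      fun j ψ e he h => hbs ⟨j, ψ, e⟩ ⟨he, h⟩
    have h1 := keyC 𝒰 bs hbsl
    by_cases hX : X ∈ 𝒰
    · have hpm := h1.mpr hX
      have hyp : ∀ (j : ℕ) (ψ : L.Formula (Fin n ⊕ Fin j)) (e : Fin j → U),
          (∀ i, e i ∈ (M : Set U)) → Rz bs ψ e →
          (SBset (M : Set U) n ψ e ∩ Xᶜ).Nonempty := by
        intro j ψ e he hr
        rcases Set.eq_empty_or_nonempty (SBset (M : Set U) n ψ e ∩ Xᶜ) with hcap | hcap
        · exfalso
          have hsubX : Xᶜ ⊆ SBset (M : Set U) n ψ.not e := by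
            intro b hb
            show Rz b.1 ψ.not e
            rw [rz_not]
            intro hrb
            exact (hcap ▸ (⟨hrb, hb⟩ : b ∈ SBset (M : Set U) n ψ e ∩ Xᶜ) :
              b ∈ (∅ : Set (SubB (M : Set U) n)))
          have hmm : SBset (M : Set U) n ψ.not e ∈ 𝒰 :=
            hmemF _ ⟨j, ψ.not, e, he, rfl, Or.inr hsubX⟩
          exact (rz_not bs ψ e).mp (hbsl j ψ.not e he hmm) hr
        · exact hcap
      obtain ⟨𝒱, hZ𝒱, hlim⟩ := limext bs Xᶜ hyp
      have h2 := keyC 𝒱 bs hlim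
      exact (Ultrafilter.compl_mem_iff_notMem.mp hZ𝒱) (h2.mp hpm)
    · have hnpm : ¬ p.mem φ bs := fun h => hX (h1.mp h)
      have hyp : ∀ (j : ℕ) (ψ : L.Formula (Fin n ⊕ Fin j)) (e : Fin j → U),
          (∀ i, e i ∈ (M : Set U)) → Rz bs ψ e →
          (SBset (M : Set U) n ψ e ∩ X).Nonempty := by
        intro j ψ e he hr
        rcases Set.eq_empty_or_nonempty (SBset (M : Set U) n ψ e ∩ X) with hcap | hcap
        · exfalso
          have hsubX : X ⊆ SBset (M : Set U) n ψ.not e := by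
            intro b hb
            show Rz b.1 ψ.not e
            rw [rz_not]
            intro hrb
            exact (hcap ▸ (⟨hrb, hb⟩ : b ∈ SBset (M : Set U) n ψ e ∩ X) :
              b ∈ (∅ : Set (SubB (M : Set U) n)))
          have hmm : SBset (M : Set U) n ψ.not e ∈ 𝒰 :=
            hmemF _ ⟨j, ψ.not, e, he, rfl, Or.inl hsubX⟩
          exact (rz_not bs ψ e).mp (hbsl j ψ.not e he hmm) hr
        · exact hcap
      obtain ⟨𝒱, hZ𝒱, hlim⟩ := limext bs X hyp
      have h2 := keyC 𝒱 bs hlim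
      exact hnpm (h2.mpr hZ𝒱)
  -- Step 2 : conclude definability over `M`
  obtain ⟨j₀, e₀, ψ₀, he₀, hdef⟩ := step1
  refine ⟨j₀, e₀, he₀, ψ₀, ?_⟩
  intro d
  have hyp : ∀ (j : ℕ) (ψ : L.Formula (Fin n ⊕ Fin j)) (e : Fin j → U),
      (∀ i, e i ∈ (M : Set U)) → Rz d ψ e →
      (SBset (M : Set U) n ψ e ∩ (Set.univ : Set (SubB (M : Set U) n))).Nonempty := by
    intro j ψ e he hr
    obtain ⟨b, hbM, hbr⟩ := elem_witness M ψ e he d hr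
    exact ⟨⟨b, hbM⟩, hbr, trivial⟩
  obtain ⟨𝒱, -, hlim⟩ := limext d Set.univ hyp
  have hgen : ∀ (j : ℕ) (ψ : L.Formula (Fin n ⊕ Fin j)) (e : Fin j → U),
      (∀ i, e i ∈ (M : Set U)) → Rz d ψ e → SBset (M : Set U) n ψ e ∈ 𝒱 := by
    intro j ψ e he hr
    by_contra h
    have hmm : SBset (M : Set U) n ψ.not e ∈ 𝒱 := by
      rw [SBset_not]; exact Ultrafilter.compl_mem_iff_notMem.2 h
    exact (rz_not d ψ e).mp (hlim j ψ.not e he hmm) hr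
  have hkey := keyC 𝒱 d hlim
  have hXeq : {b : SubB (M : Set U) n | p.mem φ b.1} = SBset (M : Set U) n ψ₀ e₀ := by
    ext b; exact hdef b
  rw [hXeq] at hkey
  constructor
  · intro h
    exact hlim j₀ ψ₀ e₀ he₀ (hkey.mp h)
  · intro h
    exact hkey.mpr (hgen j₀ ψ₀ e₀ he₀ h)
end

section
/- Let T be a complete theory, M a small model, and p a global M-invariant type. If for every global type q finitely satisfiable in M one has (p ⊗ q)|_M = (q ⊗ p)|_M, then p is a heir of its restriction to M; that is, for every formula φ(x;d) ∈ p with φ(x;y) over M and d in U, there exists b ∈ M with φ(x;b) ∈ p. -/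
open FirstOrder FirstOrder.Language

section Aux

open Paper

variable {L : Language} {U : Type*} [L.Structure U]

private lemma mem_congr {γ : Type*} (p : GType L U γ) {n n' : ℕ}
    {φ : L.Formula (γ ⊕ Fin n)} {d : Fin n → U}
    {ψ : L.Formula (γ ⊕ Fin n')} {e : Fin n' → U}
    (h : ∀ a : γ → U, Rz a φ d ↔ Rz a ψ e) (hm : p.mem φ d) : p.mem ψ e := by
  rcases p.complete ψ e with h' | h'
  · exact h'
  · exfalso
    have hlist : ∀ x ∈ ([⟨n, φ, d⟩, ⟨n', ψ.not, e⟩] :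
        List (Σ k : ℕ, L.Formula (γ ⊕ Fin k) × (Fin k → U))), p.mem x.2.1 x.2.2 := by
      rintro x hx
      simp only [List.mem_cons, List.not_mem_nil, or_false] at hx
      rcases hx with rfl | rfl
      · exact hm
      · exact h'
    obtain ⟨a, ha⟩ := p.finSat _ hlist
    have h1 : Rz a φ d := ha ⟨n, φ, d⟩ (by simp)
    have h2 : Rz a ψ.not e := ha ⟨n', ψ.not, e⟩ (by simp)
    have h3 : ¬ Rz a ψ e := Formula.realize_not.mp h2
    exact h3 ((h a).mp h1)

private lemma combine {n : ℕ}
    (s : List (Σ j : ℕ, L.Formula (Fin n ⊕ Fin j) × (Fin j → U))) :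
    ∃ (J : ℕ) (Ψ : L.Formula (Fin n ⊕ Fin J)) (E : Fin J → U),
      (∀ i, ∃ x ∈ s, ∃ i', E i = x.2.2 i') ∧
      ∀ b : Fin n → U, (Rz b Ψ E ↔ ∀ x ∈ s, Rz b x.2.1 x.2.2) := by
  induction s with
  | nil =>
      refine ⟨0, ⊤, fun i => i.elim0, fun i => i.elim0, fun b => ?_⟩
      simp [Rz]
  | cons hd tl ih =>
      obtain ⟨J, Ψ, E, hE, hΨ⟩ := ih
      refine ⟨hd.1 + J,
        (hd.2.1.relabel (Sum.map id (Fin.castAdd J))) ⊓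
          (Ψ.relabel (Sum.map id (Fin.natAdd hd.1))),
        Fin.append hd.2.2 E, ?_, ?_⟩
      · intro i
        refine Fin.addCases (fun i0 => ?_) (fun i0 => ?_) i
        · exact ⟨hd, List.mem_cons_self, i0, by rw [Fin.append_left]⟩
        · obtain ⟨x, hx, i', hi'⟩ := hE i0
          exact ⟨x, List.mem_cons_of_mem _ hx, i', by rw [Fin.append_right]; exact hi'⟩
      · intro b
        have e1 : Sum.elim b (Fin.append hd.2.2 E) ∘ Sum.map id (Fin.castAdd J)
            = Sum.elim b hd.2.2 := by
          funext x
          cases x with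
          | inl i => rfl
          | inr j => simp [Fin.append_left]
        have e2 : Sum.elim b (Fin.append hd.2.2 E) ∘ Sum.map id (Fin.natAdd hd.1)
            = Sum.elim b E := by
          funext x
          cases x with
          | inl i => rfl
          | inr j => simp [Fin.append_right]
        simp only [Rz, Formula.realize_inf, Formula.realize_relabel, e1, e2]
        constructor
        · rintro ⟨h1, h2⟩ x hx
          rcases List.mem_cons.mp hx with rfl | hx
          · exact h1
          · exact (hΨ b).mp h2 x hx
        · intro h
          exact ⟨h hd (List.mem_cons_self),
            (hΨ b).mpr fun x hx => h x (List.mem_cons_of_mem _ hx)⟩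

private lemma msat (M : L.ElementarySubstructure U) {n J : ℕ}
    (Ψ : L.Formula (Fin n ⊕ Fin J)) (E : Fin J → U) (hE : ∀ i, E i ∈ M)
    (d : Fin n → U) (hd : Rz d Ψ E) :
    ∃ b : Fin n → U, (∀ i, b i ∈ M) ∧ Rz b Ψ E := by
  classical
  let E' : Fin J → M := fun i => ⟨E i, hE i⟩
  let f : (Fin n ⊕ Fin J) → (Fin J ⊕ Fin n) := Sum.elim Sum.inr Sum.inl
  have hrz : ∀ {V : Type _} [L.Structure V] (v : Fin J → V),
      ((Ψ.relabel f).iExs (Fin n)).Realize v ↔ ∃ b : Fin n → V, Ψ.Realize (Sum.elim b v) := by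
    intro V _ v
    rw [Formula.realize_iExs]
    refine exists_congr fun b => ?_
    rw [Formula.realize_relabel, show (Sum.elim v b ∘ f) = Sum.elim b v from
      funext fun x => by cases x <;> rfl]
  have h1 : ((Ψ.relabel f).iExs (Fin n)).Realize E := (hrz E).mpr ⟨d, hd⟩
  have hEE : ⇑M.subtype ∘ E' = E := funext fun i => rfl
  have h2 : ((Ψ.relabel f).iExs (Fin n)).Realize E' :=
    (M.subtype.map_formula ((Ψ.relabel f).iExs (Fin n)) E').mp (by rw [hEE]; exact h1)
  obtain ⟨b', hb'⟩ := (hrz E').mp h2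
  refine ⟨fun i => (b' i : U), fun i => (b' i).2, ?_⟩
  have h3 := (M.subtype.map_formula Ψ (Sum.elim b' E')).mpr hb'
  have h4 : ⇑M.subtype ∘ Sum.elim b' E' = Sum.elim (fun i => ((b' i : U))) E :=
    funext fun x => by cases x <;> rfl
  rw [h4] at h3
  exact h3

private lemma exists_coheir {n : ℕ} (M : L.ElementarySubstructure U) (d : Fin n → U) :
    ∃ q : GType L U (Fin n), FinSatIn (M : Set U) q ∧
      ∀ {j : ℕ} (ψ : L.Formula (Fin n ⊕ Fin j)) (e : Fin j → U),
        (∀ i, e i ∈ M) → Rz d ψ e → q.mem ψ e := by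
  classical
  set 𝒮 : Set (Set (Fin n → M)) :=
    {T | ∃ x : Σ j : ℕ, L.Formula (Fin n ⊕ Fin j) × (Fin j → U),
      (∀ i, x.2.2 i ∈ M) ∧ Rz d x.2.1 x.2.2 ∧
      T = {b : Fin n → M | Rz (fun i => ((b i : U))) x.2.1 x.2.2}} with h𝒮
  have hne : (Filter.generate 𝒮).NeBot := by
    rw [Filter.generate_neBot_iff]
    intro t ht htfin
    have hch : ∀ T ∈ htfin.toFinset.toList,
        ∃ x : Σ j : ℕ, L.Formula (Fin n ⊕ Fin j) × (Fin j → U),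
          (∀ i, x.2.2 i ∈ M) ∧ Rz d x.2.1 x.2.2 ∧
          T = {b : Fin n → M | Rz (fun i => ((b i : U))) x.2.1 x.2.2} := by
      intro T hT
      have hTt : T ∈ t := by
        rw [Finset.mem_toList, Set.Finite.mem_toFinset] at hT
        exact hT
      exact ht hTt
    set lt := htfin.toFinset.toList with hlt
    set s : List (Σ j : ℕ, L.Formula (Fin n ⊕ Fin j) × (Fin j → U)) :=
      lt.attach.map (fun T => Classical.choose (hch T.1 T.2)) with hs
    obtain ⟨J, Ψ, E, hEmem, hequiv⟩ := combine s
    have hEM : ∀ i, E i ∈ M := by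
      intro i
      obtain ⟨x, hx, i', hi'⟩ := hEmem i
      rw [hs] at hx
      simp only [List.mem_map] at hx
      obtain ⟨T, hT, rfl⟩ := hx
      rw [hi']
      exact (Classical.choose_spec (hch T.1 T.2)).1 i'
    have hdΨ : Rz d Ψ E := by
      rw [hequiv d]
      intro x hx
      rw [hs] at hx
      simp only [List.mem_map] at hx
      obtain ⟨T, hT, rfl⟩ := hx
      exact (Classical.choose_spec (hch T.1 T.2)).2.1
    obtain ⟨b, hbM, hbΨ⟩ := msat M Ψ E hEM d hdΨ
    refine ⟨fun i => ⟨b i, hbM i⟩, ?_⟩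
    intro T hT
    have hT' : T ∈ lt := by
      rw [hlt, Finset.mem_toList, Set.Finite.mem_toFinset]
      exact hT
    have hx : Classical.choose (hch T hT') ∈ s := by
      rw [hs]
      exact List.mem_map.mpr ⟨⟨T, hT'⟩, List.mem_attach _ _, rfl⟩
    have hr := (hequiv b).mp hbΨ _ hx
    have hTeq := (Classical.choose_spec (hch T hT')).2.2
    rw [hTeq]
    exact hr
  haveI := hne
  set 𝒰 : Ultrafilter (Fin n → M) := Ultrafilter.of (Filter.generate 𝒮) with h𝒰
  have hle : ∀ T ∈ 𝒮, T ∈ 𝒰 :=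
    fun T hT => Ultrafilter.of_le (Filter.generate 𝒮)
      (Filter.mem_generate_iff.mpr ⟨{T}, by simpa using hT, Set.finite_singleton T,
        by simp⟩)
  refine ⟨⟨fun {j} ψ e => {b : Fin n → M | Rz (fun i => ((b i : U))) ψ e} ∈ 𝒰,
      ?_, ?_⟩, ?_, ?_⟩
  · intro j ψ e
    rcases Ultrafilter.mem_or_compl_mem 𝒰
        {b : Fin n → M | Rz (fun i => ((b i : U))) ψ e} with h | h
    · exact Or.inl h
    · right
      have hcompl : {b : Fin n → M | Rz (fun i => ((b i : U))) ψ.not e}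
          = {b : Fin n → M | Rz (fun i => ((b i : U))) ψ e}ᶜ := by
        ext b
        exact Formula.realize_not
      show {b : Fin n → M | Rz (fun i => ((b i : U))) ψ.not e} ∈ 𝒰
      rw [hcompl]
      exact h
  · intro s hs
    have hmem : {b : Fin n → M | ∀ x ∈ s, Rz (fun i => ((b i : U))) x.2.1 x.2.2} ∈ 𝒰 := by
      induction s with
      | nil =>
          simp only [List.not_mem_nil, false_implies, implies_true, Set.setOf_true]
          exact Filter.univ_mem
      | cons hd tl ih =>
          have h1 := hs hd (List.mem_cons_self)
          have h2 := ih (fun x hx => hs x (List.mem_cons_of_mem _ hx))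
          have h3 := Filter.inter_mem h1 h2
          apply Filter.mem_of_superset h3
          rintro b ⟨hb1, hb2⟩ x hx
          rcases List.mem_cons.mp hx with rfl | hx
          · exact hb1
          · exact hb2 x hx
    obtain ⟨b, hb⟩ := Ultrafilter.nonempty_of_mem hmem
    exact ⟨fun i => (b i : U), hb⟩
  · intro j ψ e hmem
    obtain ⟨b, hb⟩ := Ultrafilter.nonempty_of_mem hmem
    exact ⟨fun i => (b i : U), fun i => (b i).2, hb⟩
  · intro j ψ e he hd
    exact hle _ ⟨⟨j, ψ, e⟩, he, hd, rfl⟩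

private lemma rz_substY {m k n : ℕ} (φ : L.Formula (Fin m ⊕ Fin k))
    (a : Fin m → U) (b : Fin k → U) (d0 : Fin n → U) :
    Rz a (substY (φ.relabel Sum.inl : L.Formula ((Fin m ⊕ Fin k) ⊕ Fin n)))
      (Fin.append b d0) ↔ φ.Realize (Sum.elim a b) := by
  unfold Rz substY
  rw [Formula.realize_relabel, Formula.realize_relabel]
  rw [show (Sum.elim a (Fin.append b d0) ∘
      Sum.elim (Sum.map id (Fin.castAdd n)) fun j => Sum.inr (Fin.natAdd k j)) ∘ Sum.inl
      = Sum.elim a b from ?_]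
  funext x
  cases x with
  | inl i => rfl
  | inr j => simp [Function.comp, Fin.append_left]

private lemma rz_substX {m k n : ℕ} (φ : L.Formula (Fin m ⊕ Fin k))
    (a : Fin m → U) (b : Fin k → U) (d0 : Fin n → U) :
    Rz b (substX (φ.relabel Sum.inl : L.Formula ((Fin m ⊕ Fin k) ⊕ Fin n)))
      (Fin.append a d0) ↔ φ.Realize (Sum.elim a b) := by
  unfold Rz substX
  rw [Formula.realize_relabel, Formula.realize_relabel]
  rw [show (Sum.elim b (Fin.append a d0) ∘
      Sum.elim (Sum.elim (fun i => Sum.inr (Fin.castAdd n i)) Sum.inl)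
        fun j => Sum.inr (Fin.natAdd m j)) ∘ Sum.inl
      = Sum.elim a b from ?_]
  funext x
  cases x with
  | inl i => simp [Function.comp, Fin.append_left]
  | inr j => rfl

end Aux

open Paper in
/-- If a global `M`-invariant type `p` satisfies
`(p ⊗ q)|_M = (q ⊗ p)|_M` for every global type `q` finitely satisfiable in `M`,
then `p` is a heir of `p|_M` : every formula `φ(x;d) ∈ p` (with `φ` over `M`,
`d` from `U`) is satisfied with some parameter tuple from `M`. -/
theorem stmt_1 {L : Language} {U : Type*} [L.Structure U]
    (M : L.ElementarySubstructure U) (hmon : Monster L U (M : Set U))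
    {m : ℕ} (p : GType L U (Fin m)) (hinv : Invariant (M : Set U) p)
    (hcomm : ∀ (k : ℕ) (q : GType L U (Fin k)), FinSatIn (M : Set U) q →
      CommuteOn (M : Set U) (M : Set U) p q) :
    ∀ {n : ℕ} (φ : L.Formula (Fin m ⊕ Fin n)) (d : Fin n → U), p.mem φ d →
      ∃ b : Fin n → U, (∀ i, b i ∈ M) ∧ p.mem φ b := by
  intro n φ d hφ
  rcases Nat.eq_zero_or_pos n with hn | hn
  · subst hn
    exact ⟨d, fun i => i.elim0, hφ⟩
  obtain ⟨q, hqfs, hqext⟩ := exists_coheir M d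
  obtain ⟨a, ha⟩ := hmon (fun _ => d ⟨0, hn⟩) m
    {x | (∀ i, x.2.2 i ∈ (M : Set U)) ∧ p.mem x.2.1 x.2.2}
    (fun x hx i => Or.inl (hx.1 i))
    (fun s hs => p.finSat s (fun x hx => (hs x hx).2))
  have hpa : RealizesOver p a (M : Set U) := by
    intro j ψ e he hm
    exact ha ⟨j, ψ, e⟩ ⟨he, hm⟩
  set χ : L.Formula ((Fin m ⊕ Fin n) ⊕ Fin 0) := φ.relabel Sum.inl with hχ
  set d0 : Fin 0 → U := fun i => i.elim0 with hd0
  have hd0M : ∀ i : Fin 0, d0 i ∈ (M : Set U) := fun i => i.elim0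
  have hd0r : ∀ (A : Set U) (u : U), u ∈ A ∪ Set.range d0 → u ∈ A := by
    rintro A u (h | ⟨i, -⟩)
    · exact h
    · exact i.elim0
  have hPM : ProdMem (M : Set U) p q χ d0 := by
    intro b hb
    have hsame : SameTypeOver (L := L) (M : Set U) d b := by
      intro j ψ e he
      constructor
      · intro h
        exact hb ψ e (fun i => Or.inl (he i)) (hqext ψ e he h)
      · intro h
        by_contra hcon
        have hnot : Rz d ψ.not e := Formula.realize_not.mpr hcon
        have hb' := hb ψ.not e (fun i => Or.inl (he i)) (hqext ψ.not e he hnot)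
        exact Formula.realize_not.mp hb' h
    have hmemb : p.mem φ b := (hinv φ d b hsame).mp hφ
    exact mem_congr p (fun a' => (rz_substY φ a' b d0).symm) hmemb
  have hPMR : ProdMemRev (M : Set U) p q χ d0 := (hcomm n q hqfs χ d0 hd0M).mp hPM
  have hpa' : RealizesOver p a ((M : Set U) ∪ Set.range d0) := by
    intro j ψ e he hm
    exact hpa ψ e (fun i => hd0r _ _ (he i)) hm
  have hq' : q.mem (substX χ) (Fin.append a d0) := hPMR a hpa'
  obtain ⟨b, hbM, hbr⟩ := hqfs _ _ hq'
  have hab : Rz a φ b := (rz_substX φ a b d0).mp hbr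
  refine ⟨b, hbM, ?_⟩
  rcases p.complete φ b with h | h
  · exact h
  · exfalso
    exact Formula.realize_not.mp (hpa φ.not b hbM h) hab
end

section
/- Let T be a complete theory, M a small model, and p a global M-invariant type such that (p ⊗ q)|_M = (q ⊗ p)|_M for every global type q finitely satisfiable in M. Then for every formula φ(x;y) over M there are formulas θ₀(y), θ₁(y) over M such that θ₀(M) ∪ θ₁(M) = M^{|y|} and for all a ∈ M^{|y|}: p ⊢ ¬φ(x;a) iff a ⊨ θ₀, and p ⊢ φ(x;a) iff a ⊨ θ₁. Consequently p is definable over M. -/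
open FirstOrder FirstOrder.Language

namespace Stmt2Aux

open Paper Filter

variable {L : Language} {U : Type*} [L.Structure U]

section basic

variable {γ : Type*}

theorem not_mem_both (t : GType L U γ) {n : ℕ} {φ : L.Formula (γ ⊕ Fin n)} {d : Fin n → U}
    (h1 : t.mem φ d) (h2 : t.mem φ.not d) : False := by
  obtain ⟨a, ha⟩ := t.finSat [⟨n, φ, d⟩, ⟨n, φ.not, d⟩] (by
    intro x hx
    rcases List.mem_cons.mp hx with rfl | hx
    · exact h1
    · rcases List.mem_cons.mp hx with rfl | hx
      · exact h2
      · simp at hx)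
  have hφ : Rz a φ d := ha ⟨n, φ, d⟩ (by simp)
  have hφn : Rz a φ.not d := ha ⟨n, φ.not, d⟩ (by simp)
  rw [Rz, Formula.realize_not] at hφn
  exact hφn hφ

theorem mem_not_iff (t : GType L U γ) {n : ℕ} (φ : L.Formula (γ ⊕ Fin n)) (d : Fin n → U) :
    t.mem φ.not d ↔ ¬ t.mem φ d :=
  ⟨fun h2 h1 => not_mem_both t h1 h2, fun h => (t.complete φ d).resolve_left h⟩

theorem mem_congr (t : GType L U γ) {n n' : ℕ} {φ : L.Formula (γ ⊕ Fin n)} {d : Fin n → U}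
    {ψ : L.Formula (γ ⊕ Fin n')} {d' : Fin n' → U}
    (h : ∀ x : γ → U, Rz x φ d ↔ Rz x ψ d') : t.mem φ d ↔ t.mem ψ d' := by
  have key : ∀ {k k'} (χ : L.Formula (γ ⊕ Fin k)) (c : Fin k → U)
      (χ' : L.Formula (γ ⊕ Fin k')) (c' : Fin k' → U),
      (∀ x : γ → U, Rz x χ c ↔ Rz x χ' c') → t.mem χ c → t.mem χ' c' := by
    intro k k' χ c χ' c' hiff hm
    rcases t.complete χ' c' with h' | h'
    · exact h'
    · exfalso
      obtain ⟨a, ha⟩ := t.finSat [⟨k, χ, c⟩, ⟨k', χ'.not, c'⟩] (by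
        intro x hx
        rcases List.mem_cons.mp hx with rfl | hx
        · exact hm
        · rcases List.mem_cons.mp hx with rfl | hx
          · exact h'
          · simp at hx)
      have h1 : Rz a χ c := ha ⟨k, χ, c⟩ (by simp)
      have h2 : Rz a χ'.not c' := ha ⟨k', χ'.not, c'⟩ (by simp)
      rw [Rz, Formula.realize_not] at h2
      exact h2 ((hiff a).mp h1)
  exact ⟨key φ d ψ d' h, key ψ d' φ d fun x => (h x).symm⟩

theorem realizesOver_iff {A : Set U} {t : GType L U γ} {a : γ → U}
    (ha : RealizesOver t a A) {j : ℕ} (ψ : L.Formula (γ ⊕ Fin j)) (e : Fin j → U)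
    (he : ∀ i, e i ∈ A) : Rz a ψ e ↔ t.mem ψ e := by
  constructor
  · intro h
    rcases t.complete ψ e with h' | h'
    · exact h'
    · exfalso
      have := ha ψ.not e he h'
      rw [Rz, Formula.realize_not] at this
      exact this h
  · exact ha ψ e he

theorem sto_of {A : Set U} {t t' : GType L U γ} {a b : γ → U}
    (htt' : ∀ {j : ℕ} (ψ : L.Formula (γ ⊕ Fin j)) (e : Fin j → U), (∀ i, e i ∈ A) →
      (t.mem ψ e ↔ t'.mem ψ e))
    (ha : RealizesOver t a A) (hb : RealizesOver t' b A) : SameTypeOver (L := L) A a b :=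
  fun ψ e he =>
    (realizesOver_iff ha ψ e he).trans ((htt' ψ e he).trans (realizesOver_iff hb ψ e he).symm)

end basic

section qof

variable {k : ℕ}

theorem list_setOf_mem {α : Type*} (𝒰 : Ultrafilter α) :
    ∀ (l : List (Set α)), (∀ s ∈ l, s ∈ 𝒰) → {x | ∀ s ∈ l, x ∈ s} ∈ 𝒰 := by
  intro l
  induction l with
  | nil => intro _; simp only [List.not_mem_nil]; exact Filter.mem_of_superset Filter.univ_mem (by intro x _; simp)
  | cons a l ih =>
    intro h
    have h1 : a ∈ 𝒰 := h a (by simp)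
    have h2 : {x | ∀ s ∈ l, x ∈ s} ∈ 𝒰 := ih fun s hs => h s (by simp [hs])
    have := Filter.inter_mem h1 h2
    refine Filter.mem_of_superset this ?_
    intro x hx
    intro s hs
    rcases List.mem_cons.mp hs with rfl | hs
    · exact hx.1
    · exact hx.2 s hs

/-- The global type given by an ultrafilter on `U`-tuples. -/
def qOf (𝒰 : Ultrafilter (Fin k → U)) : GType L U (Fin k) where
  mem ψ d := {b | Rz b ψ d} ∈ 𝒰
  complete ψ d := by
    by_cases h : {b | Rz b ψ d} ∈ 𝒰
    · exact Or.inl h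
    · refine Or.inr ?_
      show {b | Rz b ψ.not d} ∈ 𝒰
      have : {b | Rz b ψ.not d} = {b | Rz b ψ d}ᶜ := by
        ext b; simp [Rz, Formula.realize_not]
      rw [this]
      exact (Ultrafilter.compl_mem_iff_notMem).mpr h
  finSat s hs := by
    have hmem : ∀ X ∈ s.map (fun x => {b | Rz b x.2.1 x.2.2}), X ∈ 𝒰 := by
      intro X hX
      obtain ⟨x, hx, rfl⟩ := List.mem_map.mp hX
      exact hs x hx
    have := list_setOf_mem 𝒰 _ hmem
    obtain ⟨a, ha⟩ := Ultrafilter.nonempty_of_mem this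
    refine ⟨a, fun x hx => ?_⟩
    exact ha _ (List.mem_map.mpr ⟨x, hx, rfl⟩)

theorem qOf_mem {𝒰 : Ultrafilter (Fin k → U)} {n : ℕ} {ψ : L.Formula (Fin k ⊕ Fin n)}
    {d : Fin n → U} : (qOf 𝒰).mem ψ d ↔ {b | Rz b ψ d} ∈ 𝒰 := Iff.rfl

theorem mem_uf_congr {α : Type*} {𝒰 : Ultrafilter α} {W X Y : Set α} (hW : W ∈ 𝒰)
    (h : ∀ c ∈ W, c ∈ X ↔ c ∈ Y) : X ∈ 𝒰 ↔ Y ∈ 𝒰 := by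
  constructor
  · intro hX
    exact Filter.mem_of_superset (Filter.inter_mem hX hW) fun c hc => (h c hc.2).mp hc.1
  · intro hY
    exact Filter.mem_of_superset (Filter.inter_mem hY hW) fun c hc => (h c hc.2).mpr hc.1

end qof


section realize

variable {m n : ℕ}

theorem exists_realizes (M : L.ElementarySubstructure U) (hmon : Monster L U (M : Set U))
    (u0 : U) {k : ℕ} (q : GType L U (Fin k)) : ∃ b, RealizesOver q b (M : Set U) := by
  obtain ⟨b, hb⟩ := hmon (fun _ => u0) k
    {x | (∀ i, x.2.2 i ∈ (M : Set U)) ∧ q.mem x.2.1 x.2.2}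
    (fun x hx i => Or.inl (hx.1 i))
    (fun s hs => q.finSat s fun x hx => (hs x hx).2)
  exact ⟨b, fun φ d hd hm => hb ⟨_, φ, d⟩ ⟨hd, hm⟩⟩

/-- A set of `n`-tuples definable with parameters from `A`. -/
def ADef (A : Set U) {n : ℕ} (X : Set (Fin n → U)) : Prop :=
  ∃ (j : ℕ) (e : Fin j → U) (ψ : L.Formula (Fin n ⊕ Fin j)),
    (∀ i, e i ∈ A) ∧ X = {c | Rz c ψ e}

theorem ADef.compl {A : Set U} {X : Set (Fin n → U)} (h : ADef (L := L) A X) :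
    ADef (L := L) A Xᶜ := by
  obtain ⟨j, e, ψ, he, rfl⟩ := h
  refine ⟨j, e, ψ.not, he, ?_⟩
  ext c
  simp [Rz, Formula.realize_not]

theorem ADef.univ {A : Set U} : ADef (L := L) A (Set.univ : Set (Fin n → U)) := by
  refine ⟨0, Fin.elim0, ⊤, fun i => i.elim0, ?_⟩
  ext c
  simp [Rz, Formula.realize_top]

theorem ADef.inter {A : Set U} {X Y : Set (Fin n → U)} (hX : ADef (L := L) A X)
    (hY : ADef (L := L) A Y) : ADef (L := L) A (X ∩ Y) := by
  obtain ⟨j₁, e₁, ψ₁, he₁, rfl⟩ := hX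
  obtain ⟨j₂, e₂, ψ₂, he₂, rfl⟩ := hY
  refine ⟨j₁ + j₂, Fin.append e₁ e₂,
    (ψ₁.relabel (Sum.map id (Fin.castAdd j₂))) ⊓ (ψ₂.relabel (Sum.map id (Fin.natAdd j₁))),
    ?_, ?_⟩
  · intro i
    induction i using Fin.addCases with
    | left i => simpa [Fin.append_left] using he₁ i
    | right i => simpa [Fin.append_right] using he₂ i
  · ext c
    have h1 : Sum.elim c (Fin.append e₁ e₂) ∘ Sum.map id (Fin.castAdd j₂)
        = Sum.elim c e₁ := by
      funext u
      cases u with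
      | inl i => rfl
      | inr i => simp [Fin.append_left]
    have h2 : Sum.elim c (Fin.append e₁ e₂) ∘ Sum.map id (Fin.natAdd j₁)
        = Sum.elim c e₂ := by
      funext u
      cases u with
      | inl i => rfl
      | inr i => simp [Fin.append_right]
    simp only [Set.mem_inter_iff, Set.mem_setOf_eq, Rz, Formula.realize_inf,
      Formula.realize_relabel, h1, h2]

theorem ADef.union {A : Set U} {X Y : Set (Fin n → U)} (hX : ADef (L := L) A X)
    (hY : ADef (L := L) A Y) : ADef (L := L) A (X ∪ Y) := by
  have := (hX.compl.inter hY.compl).compl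
  rwa [Set.compl_inter, compl_compl, compl_compl] at this

theorem ADef.biInter {A : Set U} (F : Finset (Set (Fin n → U)))
    (h : ∀ X ∈ F, ADef (L := L) A X) : ADef (L := L) A (⋂ X ∈ F, X) := by
  classical
  induction F using Finset.induction_on with
  | empty => simpa using ADef.univ
  | @insert Y F' hX ih =>
    rw [Finset.set_biInter_insert]
    exact (h Y (by simp)).inter (ih fun X hXF => h X (by simp [hXF]))

theorem ADef.biUnion {A : Set U} (F : Finset (Set (Fin n → U)))
    (h : ∀ X ∈ F, ADef (L := L) A X) : ADef (L := L) A (⋃ X ∈ F, X) := by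
  classical
  induction F using Finset.induction_on with
  | empty => simpa using ADef.univ.compl
  | @insert Y F' hX ih =>
    rw [Finset.set_biUnion_insert]
    exact (h Y (by simp)).union (ih fun X hXF => h X (by simp [hXF]))

/-- Any nonempty `M`-definable set has a point with coordinates in `M`
(elementarity of `M`). -/
theorem exists_mem_of_adef (M : L.ElementarySubstructure U) {j : ℕ}
    (ψ : L.Formula (Fin n ⊕ Fin j)) (e : Fin j → U) (he : ∀ i, e i ∈ M)
    (c : Fin n → U) (hc : Rz c ψ e) :
    ∃ c' : Fin n → U, (∀ i, c' i ∈ M) ∧ Rz c' ψ e := by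
  let x : Fin j → M := fun i => ⟨e i, he i⟩
  let χ : L.Formula (Fin j) := (ψ.relabel Sum.swap).iExs (Fin n)
  have hcoe : ((↑) : M → U) ∘ x = e := by funext i; rfl
  have h1 : χ.Realize e := by
    rw [Formula.realize_iExs]
    refine ⟨c, ?_⟩
    rw [Formula.realize_relabel]
    have : (Sum.elim e c ∘ Sum.swap) = Sum.elim c e := by
      funext u; cases u <;> rfl
    rw [this]
    exact hc
  have h2 : χ.Realize x := by
    rw [← M.subtype.map_formula χ x, ElementarySubstructure.coe_subtype, hcoe]
    exact h1
  rw [Formula.realize_iExs] at h2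
  obtain ⟨cM, hcM⟩ := h2
  have hcM' : ψ.Realize (Sum.elim cM x) := by
    rw [Formula.realize_relabel] at hcM
    have : (Sum.elim x cM ∘ Sum.swap) = Sum.elim cM x := by
      funext u; cases u <;> rfl
    rwa [this] at hcM
  refine ⟨fun i => (cM i : U), fun i => (cM i).2, ?_⟩
  have := M.subtype.map_formula ψ (Sum.elim cM x)
  rw [ElementarySubstructure.coe_subtype] at this
  have hco : ((↑) : M → U) ∘ Sum.elim cM x = Sum.elim (fun i => (cM i : U)) e := by
    funext u; cases u <;> rfl
  rw [hco] at this
  exact this.mpr hcM'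

end realize


section key

theorem rz_substY {m n : ℕ} (φ : L.Formula (Fin m ⊕ Fin n)) (x : Fin m → U) (b : Fin n → U)
    (d0 : Fin 0 → U) :
    Rz x (substY (φ.relabel Sum.inl)) (Fin.append b d0) ↔ Rz x φ b := by
  have hfun : (Sum.elim x (Fin.append b d0) ∘
      Sum.elim (Sum.map id (Fin.castAdd 0)) (fun j => Sum.inr (Fin.natAdd n j))) ∘ Sum.inl
      = Sum.elim x b := by
    funext u
    cases u with
    | inl i => rfl
    | inr i =>
      rw [Subsingleton.elim d0 Fin.elim0]
      simp [Fin.append_elim0]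
  rw [Rz, Rz, substY, Formula.realize_relabel, Formula.realize_relabel, hfun]

theorem rz_substX {m n : ℕ} (φ : L.Formula (Fin m ⊕ Fin n)) (a : Fin m → U) (y : Fin n → U)
    (d0 : Fin 0 → U) :
    Rz y (substX (φ.relabel Sum.inl)) (Fin.append a d0) ↔ Rz a φ y := by
  have hfun : (Sum.elim y (Fin.append a d0) ∘
      Sum.elim (Sum.elim (fun i => Sum.inr (Fin.castAdd 0 i)) Sum.inl)
        (fun j => Sum.inr (Fin.natAdd m j))) ∘ Sum.inl
      = Sum.elim a y := by
    funext u
    cases u with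
    | inl i =>
      rw [Subsingleton.elim d0 Fin.elim0]
      simp [Fin.append_elim0]
    | inr i => rfl
  rw [Rz, Rz, substX, Formula.realize_relabel, Formula.realize_relabel, hfun]

theorem uf_finsets (α : Type*) : ∃ 𝒱 : Ultrafilter (Finset α), ∀ x : α, {F | x ∈ F} ∈ 𝒱 := by
  classical
  haveI : Nonempty (Finset α) := ⟨∅⟩
  refine ⟨Ultrafilter.of Filter.atTop, fun x => ?_⟩
  refine Filter.le_def.mp (Ultrafilter.of_le Filter.atTop) _ ?_
  exact Filter.eventually_atTop.mpr ⟨{x}, fun F hF => Finset.singleton_subset_iff.mp hF⟩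

theorem key (M : L.ElementarySubstructure U) (hmon : Monster L U (M : Set U))
    {m : ℕ} (p : GType L U (Fin m)) (hinv : Invariant (M : Set U) p)
    (hcomm : ∀ (k : ℕ) (q : GType L U (Fin k)), FinSatIn (M : Set U) q →
      CommuteOn (M : Set U) (M : Set U) p q)
    (u0 : U) {n : ℕ} (φ : L.Formula (Fin m ⊕ Fin n))
    (𝒰 : Ultrafilter (Fin n → U)) (hMA : {c | ∀ i, c i ∈ (M : Set U)} ∈ 𝒰)
    (b : Fin n → U) (hb : RealizesOver (qOf (L := L) 𝒰) b (M : Set U)) :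
    p.mem φ b ↔ {c | p.mem φ c} ∈ 𝒰 := by
  set A := (M : Set U) with hA
  have hfs : FinSatIn A (qOf (L := L) 𝒰) := by
    intro k ψ d hmem
    have hint : ({b' | Rz b' ψ d} ∩ {c | ∀ i, c i ∈ A}) ∈ 𝒰 := Filter.inter_mem hmem hMA
    obtain ⟨b', hb'⟩ := Ultrafilter.nonempty_of_mem hint
    exact ⟨b', hb'.2, hb'.1⟩
  have hq : CommuteOn A A p (qOf (L := L) 𝒰) := hcomm n (qOf (L := L) 𝒰) hfs
  set d0 : Fin 0 → U := Fin.elim0 with hd0def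
  have hAd0 : A ∪ Set.range d0 = A := by simp
  obtain ⟨a0, ha0⟩ := exists_realizes M hmon u0 p
  have hiff := hq (φ.relabel Sum.inl) d0 (fun i => i.elim0)
  have hPM : ProdMem A p (qOf (L := L) 𝒰) (φ.relabel Sum.inl) d0 ↔ p.mem φ b := by
    constructor
    · intro h
      have hb' : RealizesOver (qOf (L := L) 𝒰) b (A ∪ Set.range d0) := by rw [hAd0]; exact hb
      have := h b hb'
      exact (mem_congr p fun x => rz_substY φ x b d0).mp this
    · intro hv b2 hb2
      rw [hAd0] at hb2
      have hsto : SameTypeOver (L := L) A b2 b :=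
        sto_of (t := qOf (L := L) 𝒰) (t' := qOf (L := L) 𝒰) (fun ψ e he => Iff.rfl) hb2 hb
      exact (mem_congr p fun x => rz_substY φ x b2 d0).mpr ((hinv φ b2 b hsto).mpr hv)
  have hPMR : ProdMemRev A p (qOf (L := L) 𝒰) (φ.relabel Sum.inl) d0 ↔ {c | p.mem φ c} ∈ 𝒰 := by
    have hset : ∀ a : Fin m → U, RealizesOver p a A →
        ({y | Rz y (substX (φ.relabel Sum.inl)) (Fin.append a d0)} ∈ 𝒰
          ↔ {c | p.mem φ c} ∈ 𝒰) := by
      intro a ha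
      refine mem_uf_congr hMA ?_
      intro c hc
      simp only [Set.mem_setOf_eq]
      rw [rz_substX φ a c d0]
      exact realizesOver_iff ha φ c hc
    constructor
    · intro h
      have ha0' : RealizesOver p a0 (A ∪ Set.range d0) := by rw [hAd0]; exact ha0
      exact (hset a0 ha0).mp (h a0 ha0')
    · intro hS a ha
      rw [hAd0] at ha
      exact (hset a ha).mpr hS
  rw [hPM, hPMR] at hiff
  exact hiff

end key


section main

theorem ADef.biInterF {n : ℕ} {A : Set U} {β : Type*} (F : Finset β)
    (f : β → Set (Fin n → U)) (h : ∀ X ∈ F, ADef (L := L) A (f X)) :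
    ADef (L := L) A (⋂ X ∈ F, f X) := by
  classical
  induction F using Finset.induction_on with
  | empty => simpa using ADef.univ
  | @insert Y F' hY ih =>
    rw [Finset.set_biInter_insert]
    exact (h Y (by simp)).inter (ih fun X hXF => h X (by simp [hXF]))

theorem ADef.biUnionF {n : ℕ} {A : Set U} {β : Type*} (F : Finset β)
    (f : β → Set (Fin n → U)) (h : ∀ X ∈ F, ADef (L := L) A (f X)) :
    ADef (L := L) A (⋃ X ∈ F, f X) := by
  classical
  induction F using Finset.induction_on with
  | empty => simpa using ADef.univ.compl
  | @insert Y F' hY ih =>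
    rw [Finset.set_biUnion_insert]
    exact (h Y (by simp)).union (ih fun X hXF => h X (by simp [hXF]))

theorem lemmaA (M : L.ElementarySubstructure U) (hmon : Monster L U (M : Set U))
    {m : ℕ} (p : GType L U (Fin m)) (hinv : Invariant (M : Set U) p)
    (hcomm : ∀ (k : ℕ) (q : GType L U (Fin k)), FinSatIn (M : Set U) q →
      CommuteOn (M : Set U) (M : Set U) p q)
    (u0 : U) {n : ℕ} (φ : L.Formula (Fin m ⊕ Fin n)) :
    ∃ (j : ℕ) (e : Fin j → U) (ψ : L.Formula (Fin n ⊕ Fin j)), (∀ i, e i ∈ (M : Set U)) ∧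
      ∀ c : Fin n → U, (∀ i, c i ∈ (M : Set U)) → (p.mem φ c ↔ Rz c ψ e) := by
  classical
  set A := (M : Set U) with hA
  by_contra hmain
  have Hns : ∀ X : Set (Fin n → U), ADef (L := L) A X →
      ∃ c, (∀ i, c i ∈ A) ∧ ¬(p.mem φ c ↔ c ∈ X) := by
    intro X hX
    by_contra hcon
    push_neg at hcon
    obtain ⟨j, e, ψ, he, rfl⟩ := hX
    exact hmain ⟨j, e, ψ, he, fun c hc => hcon c hc⟩
  have cell : ∀ F : Finset (Set (Fin n → U)), ∃ a a' : Fin n → U,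
      (∀ i, a i ∈ A) ∧ p.mem φ a ∧ (∀ i, a' i ∈ A) ∧ p.mem φ.not a' ∧
      ∀ X ∈ F, ADef (L := L) A X → (a ∈ X ↔ a' ∈ X) := by
    intro F
    set G := F.filter (fun X => ADef (L := L) A X) with hG
    set cellS : Finset (Set (Fin n → U)) → Set (Fin n → U) :=
      fun P => (⋂ X ∈ P, X) ∩ (⋂ X ∈ G \ P, Xᶜ) with hcellS
    have hcellADef : ∀ P : Finset (Set (Fin n → U)), P ⊆ G → ADef (L := L) A (cellS P) :=
      fun P hPG =>
        (ADef.biInterF P id fun X hX => (Finset.mem_filter.mp (hPG hX)).2).inter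
        (ADef.biInterF (G \ P) compl fun X hX =>
          ((Finset.mem_filter.mp (Finset.sdiff_subset hX)).2).compl)
    set T := G.powerset.filter
      (fun P => ∃ a, (∀ i, a i ∈ A) ∧ p.mem φ a ∧ a ∈ cellS P) with hT
    set Y := ⋃ P ∈ T, cellS P with hY
    have hYADef : ADef (L := L) A Y := ADef.biUnionF T cellS fun P hP =>
      hcellADef P (Finset.mem_powerset.mp (Finset.mem_filter.mp hP).1)
    obtain ⟨c, hcA, hc⟩ := Hns Y hYADef
    by_cases hm : p.mem φ c
    · exfalso
      apply hc
      refine ⟨fun _ => ?_, fun _ => hm⟩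
      set Pc := G.filter (fun X => c ∈ X) with hPc
      have hcCell : c ∈ cellS Pc := by
        constructor
        · exact Set.mem_iInter₂.mpr fun X hX => (Finset.mem_filter.mp hX).2
        · refine Set.mem_iInter₂.mpr fun X hX => ?_
          have hX' := Finset.mem_sdiff.mp hX
          intro hcX
          exact hX'.2 (Finset.mem_filter.mpr ⟨hX'.1, hcX⟩)
      have hPcT : Pc ∈ T := Finset.mem_filter.mpr
        ⟨Finset.mem_powerset.mpr (Finset.filter_subset _ _), ⟨c, hcA, hm, hcCell⟩⟩
      exact Set.mem_biUnion hPcT hcCell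
    · have hmn : p.mem φ.not c := (p.complete φ c).resolve_left hm
      have hcY : c ∈ Y := by
        by_contra hcY
        exact hc ⟨fun h => (hm h).elim, fun h => (hcY h).elim⟩
      obtain ⟨P, hPT, hcP⟩ := Set.mem_iUnion₂.mp hcY
      obtain ⟨a, haA, haM, haCell⟩ := (Finset.mem_filter.mp hPT).2
      refine ⟨a, c, haA, haM, hcA, hmn, ?_⟩
      intro X hXF hXD
      have hXG : X ∈ G := Finset.mem_filter.mpr ⟨hXF, hXD⟩
      by_cases hXP : X ∈ P
      · exact iff_of_true (Set.mem_iInter₂.mp haCell.1 X hXP)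
          (Set.mem_iInter₂.mp hcP.1 X hXP)
      · have hXGP : X ∈ G \ P := Finset.mem_sdiff.mpr ⟨hXG, hXP⟩
        exact iff_of_false (Set.mem_iInter₂.mp haCell.2 X hXGP)
          (Set.mem_iInter₂.mp hcP.2 X hXGP)
  choose aF bF h1 h2 h3 h4 h5 using cell
  obtain ⟨𝒱, h𝒱⟩ := uf_finsets (Set (Fin n → U))
  set 𝒰 := 𝒱.map aF with h𝒰
  set 𝒰' := 𝒱.map bF with h𝒰'
  have hMA : {c | ∀ i, c i ∈ A} ∈ 𝒰 := Ultrafilter.mem_map.mpr (Filter.univ_mem' fun F => h1 F)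
  have hMA' : {c | ∀ i, c i ∈ A} ∈ 𝒰' := Ultrafilter.mem_map.mpr (Filter.univ_mem' fun F => h3 F)
  have hS1 : {c | p.mem φ c} ∈ 𝒰 := Ultrafilter.mem_map.mpr (Filter.univ_mem' fun F => h2 F)
  have hS0 : {c | p.mem φ.not c} ∈ 𝒰' := Ultrafilter.mem_map.mpr (Filter.univ_mem' fun F => h4 F)
  have htrace : ∀ X : Set (Fin n → U), ADef (L := L) A X → (X ∈ 𝒰 ↔ X ∈ 𝒰') := by
    intro X hX
    have h' : {F : Finset (Set (Fin n → U)) | aF F ∈ X ↔ bF F ∈ X} ∈ 𝒱 :=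
      Filter.mem_of_superset (h𝒱 X) fun F hF => h5 F X hF hX
    rw [Ultrafilter.mem_map, Ultrafilter.mem_map]
    exact mem_uf_congr h' fun F hF => hF
  obtain ⟨b, hb⟩ := exists_realizes M hmon u0 (qOf (L := L) 𝒰)
  obtain ⟨b', hb'⟩ := exists_realizes M hmon u0 (qOf (L := L) 𝒰')
  have hk := key M hmon p hinv hcomm u0 φ 𝒰 hMA b hb
  have hk' := key M hmon p hinv hcomm u0 φ 𝒰' hMA' b' hb'
  have hbb' : SameTypeOver (L := L) A b b' :=
    sto_of (t := qOf (L := L) 𝒰) (t' := qOf (L := L) 𝒰')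
      (fun ψ e he => htrace {c | Rz c ψ e} ⟨_, e, ψ, he, rfl⟩) hb hb'
  have hvb : p.mem φ b := hk.mpr hS1
  have hvb' : p.mem φ b' := (hinv φ b b' hbb').mp hvb
  have hS1' : {c | p.mem φ c} ∈ 𝒰' := hk'.mp hvb'
  obtain ⟨c0, hc01, hc02⟩ := Ultrafilter.nonempty_of_mem (Filter.inter_mem hS1' hS0)
  exact not_mem_both p hc01 hc02

theorem lemmaB (M : L.ElementarySubstructure U) (hmon : Monster L U (M : Set U))
    {m : ℕ} (p : GType L U (Fin m)) (hinv : Invariant (M : Set U) p)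
    (hcomm : ∀ (k : ℕ) (q : GType L U (Fin k)), FinSatIn (M : Set U) q →
      CommuteOn (M : Set U) (M : Set U) p q)
    (u0 : U) {n : ℕ} (φ : L.Formula (Fin m ⊕ Fin n)) {j : ℕ} (e : Fin j → U)
    (ψ : L.Formula (Fin n ⊕ Fin j)) (he : ∀ i, e i ∈ (M : Set U))
    (hθ : ∀ c : Fin n → U, (∀ i, c i ∈ (M : Set U)) → (p.mem φ c ↔ Rz c ψ e))
    (d : Fin n → U) : p.mem φ d ↔ Rz d ψ e := by
  classical
  set A := (M : Set U) with hA
  have celld : ∀ F : Finset (Set (Fin n → U)), ∃ c, (∀ i, c i ∈ A) ∧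
      ∀ X ∈ F, ADef (L := L) A X → d ∈ X → c ∈ X := by
    intro F
    set G := F.filter (fun X => ADef (L := L) A X ∧ d ∈ X) with hG
    have hZ : ADef (L := L) A (⋂ X ∈ G, X) :=
      ADef.biInterF G id fun X hX => (Finset.mem_filter.mp hX).2.1
    have hdZ : d ∈ ⋂ X ∈ G, X :=
      Set.mem_iInter₂.mpr fun X hX => (Finset.mem_filter.mp hX).2.2
    obtain ⟨j', e', ψ', he', hEq⟩ := hZ
    obtain ⟨c, hcA, hc⟩ := exists_mem_of_adef M ψ' e' he' d (by rw [hEq] at hdZ; exact hdZ)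
    refine ⟨c, hcA, fun X hXF hXD hdX => ?_⟩
    have hcZ : c ∈ ⋂ X ∈ G, X := by rw [hEq]; exact hc
    exact Set.mem_iInter₂.mp hcZ X (Finset.mem_filter.mpr ⟨hXF, hXD, hdX⟩)
  choose cF hcA hcX using celld
  obtain ⟨𝒱, h𝒱⟩ := uf_finsets (Set (Fin n → U))
  set 𝒰 := 𝒱.map cF with h𝒰
  have hMA : {c | ∀ i, c i ∈ A} ∈ 𝒰 := Ultrafilter.mem_map.mpr (Filter.univ_mem' fun F => hcA F)
  have hpt : ∀ X : Set (Fin n → U), ADef (L := L) A X → (X ∈ 𝒰 ↔ d ∈ X) := by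
    intro X hX
    constructor
    · intro hXU
      by_contra hdX
      have hXc : Xᶜ ∈ 𝒰 := Ultrafilter.mem_map.mpr (Filter.mem_of_superset (h𝒱 Xᶜ)
        fun F hF => hcX F Xᶜ hF hX.compl hdX)
      obtain ⟨c0, hc01, hc02⟩ := Ultrafilter.nonempty_of_mem (Filter.inter_mem hXU hXc)
      exact hc02 hc01
    · intro hdX
      exact Ultrafilter.mem_map.mpr (Filter.mem_of_superset (h𝒱 X)
        fun F hF => hcX F X hF hX hdX)
  obtain ⟨b, hb⟩ := exists_realizes M hmon u0 (qOf (L := L) 𝒰)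
  have hk := key M hmon p hinv hcomm u0 φ 𝒰 hMA b hb
  have hbd : SameTypeOver (L := L) A b d := by
    intro j'' ψ'' e'' he''
    have h1 : Rz b ψ'' e'' ↔ (qOf (L := L) 𝒰).mem ψ'' e'' := realizesOver_iff hb ψ'' e'' he''
    have h3 := hpt {c | Rz c ψ'' e''} ⟨_, e'', ψ'', he'', rfl⟩
    exact h1.trans h3
  have hmemd : p.mem φ d ↔ {c | p.mem φ c} ∈ 𝒰 := ((hinv φ b d hbd).symm).trans hk
  have hSX : {c | p.mem φ c} ∈ 𝒰 ↔ {c | Rz c ψ e} ∈ 𝒰 :=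
    mem_uf_congr hMA fun c hc => hθ c hc
  rw [hmemd, hSX]
  exact hpt {c | Rz c ψ e} ⟨j, e, ψ, he, rfl⟩

end main

end Stmt2Aux

open Paper in
/-- If a global `M`-invariant type `p` satisfies
`(p ⊗ q)|_M = (q ⊗ p)|_M` for every global type `q` finitely satisfiable in `M`,
then for each `φ(x;y)` there are `M`-formulas `θ₀, θ₁` covering `M^{|y|}` such that
for `a ∈ M^{|y|}` : `¬φ(x;a) ∈ p ↔ a ⊨ θ₀` and `φ(x;a) ∈ p ↔ a ⊨ θ₁`.
Consequently `p` is definable over `M`. -/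
theorem stmt_2 {L : Language} {U : Type*} [L.Structure U]
    (M : L.ElementarySubstructure U) (hmon : Monster L U (M : Set U))
    {m : ℕ} (p : GType L U (Fin m)) (hinv : Invariant (M : Set U) p)
    (hcomm : ∀ (k : ℕ) (q : GType L U (Fin k)), FinSatIn (M : Set U) q →
      CommuteOn (M : Set U) (M : Set U) p q) :
    (∀ {n : ℕ} (φ : L.Formula (Fin m ⊕ Fin n)),
      ∃ (j : ℕ) (e : Fin j → U), (∀ i, e i ∈ M) ∧
        ∃ θ₀ θ₁ : L.Formula (Fin n ⊕ Fin j),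
          (∀ a : Fin n → U, (∀ i, a i ∈ M) →
            θ₀.Realize (Sum.elim a e) ∨ θ₁.Realize (Sum.elim a e)) ∧
          (∀ a : Fin n → U, (∀ i, a i ∈ M) →
            ((p.mem φ.not a ↔ θ₀.Realize (Sum.elim a e)) ∧
             (p.mem φ a ↔ θ₁.Realize (Sum.elim a e)))))
    ∧ DefinableOver (M : Set U) p := by
  classical
  by_cases hU : Nonempty U
  · obtain ⟨u0⟩ := hU
    constructor
    · intro n φ
      obtain ⟨j, e, ψ, he, hsep⟩ := Stmt2Aux.lemmaA M hmon p hinv hcomm u0 φ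
      refine ⟨j, e, he, ψ.not, ψ, ?_, ?_⟩
      · intro a _
        by_cases h : ψ.Realize (Sum.elim a e)
        · exact Or.inr h
        · exact Or.inl (by rw [Formula.realize_not]; exact h)
      · intro a ha
        constructor
        · rw [Stmt2Aux.mem_not_iff, Formula.realize_not]
          exact not_congr (hsep a ha)
        · exact hsep a ha
    · intro n φ
      obtain ⟨j, e, ψ, he, hsep⟩ := Stmt2Aux.lemmaA M hmon p hinv hcomm u0 φ
      exact ⟨j, e, he, ψ, fun d => Stmt2Aux.lemmaB M hmon p hinv hcomm u0 φ e ψ he hsep d⟩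
  · rw [not_nonempty_iff] at hU
    constructor
    · intro n φ
      cases n with
      | zero =>
        by_cases hm : p.mem φ Fin.elim0
        · refine ⟨0, Fin.elim0, fun i => i.elim0, ⊥, ⊤,
            fun a _ => Or.inr (Formula.realize_top.mpr trivial), ?_⟩
          intro a _
          have ha : a = Fin.elim0 := funext fun i => i.elim0
          subst ha
          constructor
          · constructor
            · intro h
              exact (Stmt2Aux.not_mem_both p hm h).elim
            · intro h
              exact (Formula.realize_bot.mp h).elim
          · exact ⟨fun _ => Formula.realize_top.mpr trivial, fun _ => hm⟩
        · have hmn : p.mem φ.not Fin.elim0 := (p.complete φ _).resolve_left hm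
          refine ⟨0, Fin.elim0, fun i => i.elim0, ⊤, ⊥,
            fun a _ => Or.inl (Formula.realize_top.mpr trivial), ?_⟩
          intro a _
          have ha : a = Fin.elim0 := funext fun i => i.elim0
          subst ha
          constructor
          · exact ⟨fun _ => Formula.realize_top.mpr trivial, fun _ => hmn⟩
          · exact ⟨fun h => absurd h hm, fun h => (Formula.realize_bot.mp h).elim⟩
      | succ n' =>
        exact ⟨0, Fin.elim0, fun i => i.elim0, ⊤, ⊤,
          fun a _ => (hU.false (a 0)).elim, fun a _ => (hU.false (a 0)).elim⟩
    · intro n φ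
      cases n with
      | zero =>
        by_cases hm : p.mem φ Fin.elim0
        · refine ⟨0, Fin.elim0, fun i => i.elim0, ⊤, fun d => ?_⟩
          have hd : d = Fin.elim0 := funext fun i => i.elim0
          subst hd
          exact ⟨fun _ => Formula.realize_top.mpr trivial, fun _ => hm⟩
        · refine ⟨0, Fin.elim0, fun i => i.elim0, ⊥, fun d => ?_⟩
          have hd : d = Fin.elim0 := funext fun i => i.elim0
          subst hd
          exact ⟨fun h => absurd h hm, fun h => (Formula.realize_bot.mp h).elim⟩
      | succ n' =>
        exact ⟨0, Fin.elim0, fun i => i.elim0, ⊤, fun d => (hU.false (d 0)).elim⟩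
end

section
/- Let φ(x;y) be an NIP formula with alternation number n = alt(φ). If (b_i : i < ω) is an indiscernible sequence and the set {φ(x;b_i) : i < n/2 + 1} is consistent, then the set {φ(x;b_i) : i < ω} is consistent. -/
open FirstOrder FirstOrder.Language

namespace Paper

variable {L : Language} {U : Type*} [L.Structure U]

/-- There is an indiscernible sequence and a tuple alternating on `φ` at least `n` times. -/
def AltBounded {m k : ℕ} (φ : L.Formula (Fin m ⊕ Fin k)) (n : ℕ) : Prop :=
  ∃ (I : ℕ → Fin k → U) (a : Fin m → U), IndiscOver (L := L) (∅ : Set U) I ∧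
    ∀ i < n, ¬ (Rz a φ (I i) ↔ Rz a φ (I (i + 1)))

/-- `n` is the alternation number of the (NIP) formula `φ` : `n` alternations occur on
some indiscernible sequence, but not `n + 1`. -/
def IsAltNum {m k : ℕ} (φ : L.Formula (Fin m ⊕ Fin k)) (n : ℕ) : Prop :=
  AltBounded (U := U) φ n ∧ ¬ AltBounded (U := U) φ (n + 1)

end Paper

-- === auxiliary lemmas ===
namespace Paper
variable {L : Language} {U : Type*} [L.Structure U]

noncomputable def psi {m k : ℕ} (φ : L.Formula (Fin m ⊕ Fin k)) (N : ℕ) :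
    L.Formula ((Fin N × Fin k) ⊕ Fin 0) :=
  Formula.iExs (Fin m) (Formula.relabel (Sum.elim (fun t => Sum.inr t) (fun v => Sum.inl (Sum.inl v)))
    (BoundedFormula.iInf (α := Fin m ⊕ (Fin N × Fin k)) (n := 0)
      (fun i : Fin N => φ.relabel (Sum.map id (fun j : Fin k => (i, j))))))

lemma realize_psi {m k : ℕ} (φ : L.Formula (Fin m ⊕ Fin k)) (N : ℕ)
    (w : (Fin N × Fin k) ⊕ Fin 0 → U) :
    (psi φ N).Realize w ↔
      ∃ a : Fin m → U, ∀ i : Fin N,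
        φ.Realize (Sum.elim a (fun j => w (Sum.inl (i, j)))) := by
  rw [psi, Formula.realize_iExs]
  refine exists_congr fun a => ?_
  rw [Formula.realize_relabel, Function.comp_def]
  rw [show Formula.Realize (L := L) (M := U) (BoundedFormula.iInf
      (fun i : Fin N => φ.relabel (Sum.map id (fun j : Fin k => (i, j)))))
      (fun x => Sum.elim w a ((Sum.elim (fun t => Sum.inr t)
        (fun v => Sum.inl (Sum.inl v)) : (Fin m ⊕ (Fin N × Fin k)) → _) x)) ↔ _
    from BoundedFormula.realize_iInf]
  refine forall_congr' fun i => ?_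
  have h := Formula.realize_relabel (M := U) (φ := φ)
    (g := (Sum.map id (fun j : Fin k => (i, j)) : Fin m ⊕ Fin k → Fin m ⊕ (Fin N × Fin k)))
    (v := fun x => Sum.elim w a ((Sum.elim (fun t => Sum.inr t)
        (fun v => Sum.inl (Sum.inl v)) : (Fin m ⊕ (Fin N × Fin k)) → _) x))
  rw [show (BoundedFormula.Realize (L := L) (M := U)
      (φ.relabel (Sum.map id (fun j : Fin k => (i, j)))) _ _ : Prop) ↔ _ from h]
  apply iff_of_eq; congr 1; funext x; cases x <;> rfl

lemma cons_transfer {m k : ℕ} {φ : L.Formula (Fin m ⊕ Fin k)} {b : ℕ → Fin k → U}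
    (hb : IndiscOver (L := L) (∅ : Set U) b) {N : ℕ} {f g : Fin N → ℕ}
    (hf : StrictMono f) (hg : StrictMono g) :
    (∃ a : Fin m → U, ∀ i : Fin N, Rz a φ (b (f i))) ↔
    (∃ a : Fin m → U, ∀ i : Fin N, Rz a φ (b (g i))) := by
  have key := hb N 0 (psi φ N) Fin.elim0 (fun i => i.elim0) f g hf hg
  rw [realize_psi, realize_psi] at key
  exact key

end Paper

open Paper in
/-- Let `φ(x;y)` be an NIP formula with alternation number `n = alt(φ)`.
If `(b_i : i < ω)` is indiscernible and `{φ(x;b_i) : i < n/2 + 1}` is consistent,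
then `{φ(x;b_i) : i < ω}` is consistent. -/
theorem stmt_5 {L : Language} {U : Type*} [L.Structure U]
    {m k : ℕ} (φ : L.Formula (Fin m ⊕ Fin k)) (n : ℕ)
    (hNIP : ¬ ∃ (a : ℕ → Fin m → U) (c : Finset ℕ → Fin k → U),
      ∀ (i : ℕ) (s : Finset ℕ), (φ.Realize (Sum.elim (a i) (c s)) ↔ i ∈ s))
    (halt : IsAltNum (U := U) φ n)
    (b : ℕ → Fin k → U) (hb : IndiscOver (L := L) (∅ : Set U) b)
    (hsat : RealizesTypesOver L U (⋃ i, Set.range (b i)))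
    (hcons : ∃ a : Fin m → U, ∀ i < n / 2 + 1, Rz a φ (b i)) :
    ∃ a : Fin m → U, ∀ i : ℕ, Rz a φ (b i) := by
  classical
  set Q : ℕ → Prop := fun N => ∃ a : Fin m → U, ∀ i : Fin N, Rz a φ (b i) with hQdef
  have hid : ∀ N : ℕ, StrictMono (fun i : Fin N => (i : ℕ)) := fun N _ _ h => h
  -- the key step
  have hstep : ∀ N, n / 2 + 1 ≤ N → Q N → Q (N + 1) := by
    intro N hNn hQN
    by_contra hnot
    -- get a realizing φ at the odd indices 2i+1, i < N
    have hodds : ∃ a : Fin m → U, ∀ i : Fin N, Rz a φ (b (2 * (i : ℕ) + 1)) := by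
      rw [cons_transfer hb (f := fun i : Fin N => 2 * (i : ℕ) + 1)
        (fun x y h => by simp only []; omega) (hid N)]
      exact hQN
    obtain ⟨a, ha⟩ := hodds
    have haN : ∀ i : ℕ, i < N → Rz a φ (b (2 * i + 1)) := fun i hi => ha ⟨i, hi⟩
    -- a fails φ at every even index 2t, t ≤ N
    have heven : ∀ t : ℕ, t ≤ N → ¬ Rz a φ (b (2 * t)) := by
      intro t ht hRz
      apply hnot
      refine (cons_transfer hb (f := fun i : Fin (N + 1) =>
          if (i : ℕ) < t then 2 * (i : ℕ) + 1 else if (i : ℕ) = t then 2 * t else 2 * (i : ℕ) - 1)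
        (g := fun i : Fin (N + 1) => (i : ℕ))
        (fun x y h => by
          have hxy : (x : ℕ) < (y : ℕ) := h
          simp only []
          split_ifs <;> omega) (hid (N + 1))).mp ⟨a, fun i => ?_⟩
      rcases lt_trichotomy (i : ℕ) t with h1 | h1 | h1
      · simp only [if_pos h1]
        exact haN _ (lt_of_lt_of_le h1 ht)
      · simp only [if_neg (by omega : ¬ (i : ℕ) < t), if_pos h1]
        exact hRz
      · have hi1 : (i : ℕ) ≤ N := Nat.lt_succ_iff.mp i.isLt
        simp only [if_neg (by omega : ¬ (i : ℕ) < t), if_neg (by omega : ¬ (i : ℕ) = t)]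
        have he : 2 * (i : ℕ) - 1 = 2 * ((i : ℕ) - 1) + 1 := by omega
        rw [he]
        exact haN _ (by omega)
    -- now a alternates n+1 times on b, contradiction
    apply halt.2
    refine ⟨b, a, hb, fun i hi => ?_⟩
    have h2N : n + 1 ≤ 2 * N := by omega
    rcases Nat.even_or_odd i with ⟨t, hteq⟩ | ⟨t, hteq⟩
    · -- i = t + t even : ¬φ at i, φ at i+1
      have h1 : ¬ Rz a φ (b i) := by
        rw [hteq, show t + t = 2 * t by ring]; exact heven t (by omega)
      have h2 : Rz a φ (b (i + 1)) := by
        rw [hteq, show t + t + 1 = 2 * t + 1 by ring]; exact haN t (by omega)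
      exact fun hiff => h1 (hiff.mpr h2)
    · -- i = 2t+1 odd : φ at i, ¬φ at i+1
      have h1 : Rz a φ (b i) := by
        rw [hteq]; exact haN t (by omega)
      have h2 : ¬ Rz a φ (b (i + 1)) := by
        rw [hteq, show 2 * t + 1 + 1 = 2 * (t + 1) by ring]; exact heven (t + 1) (by omega)
      exact fun hiff => h2 (hiff.mp h1)
  -- Q holds everywhere
  have hmono : ∀ M N : ℕ, M ≤ N → Q N → Q M := by
    rintro M N h ⟨a, ha⟩
    exact ⟨a, fun i => by simpa using ha (Fin.castLE h i)⟩
  have hbase : Q (n / 2 + 1) := by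
    obtain ⟨a, ha⟩ := hcons
    exact ⟨a, fun i => ha i i.isLt⟩
  have hQadd : ∀ j : ℕ, Q (n / 2 + 1 + j) := by
    intro j
    induction j with
    | zero => exact hbase
    | succ j ih => exact hstep _ (Nat.le_add_right _ _) ih
  have hall : ∀ N, Q N := fun N => hmono N (n / 2 + 1 + N) (by omega) (hQadd N)
  -- use realization of types to get a global realization
  set S : Set (Σ r : ℕ, L.Formula (Fin m ⊕ Fin r) × (Fin r → U)) :=
    { x | ∃ i : ℕ, x = ⟨k, (φ, b i)⟩ } with hSdef
  have hparam : ∀ x ∈ S, ∀ j, x.2.2 j ∈ ⋃ i, Set.range (b i) := by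
    rintro x ⟨i, rfl⟩ j
    exact Set.mem_iUnion.mpr ⟨i, ⟨j, rfl⟩⟩
  have hfin : ∀ s : List (Σ r : ℕ, L.Formula (Fin m ⊕ Fin r) × (Fin r → U)),
      (∀ x ∈ s, x ∈ S) → ∃ a : Fin m → U, ∀ x ∈ s, Rz a x.2.1 x.2.2 := by
    intro s hs
    have hbound : ∃ N : ℕ, ∀ x ∈ s, ∃ i < N, x = (⟨k, (φ, b i)⟩ :
        Σ r : ℕ, L.Formula (Fin m ⊕ Fin r) × (Fin r → U)) := by
      induction s with
      | nil => exact ⟨0, fun x hx => absurd hx List.not_mem_nil⟩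
      | cons y s ih =>
        obtain ⟨N, hN⟩ := ih (fun x hx => hs x (List.mem_cons_of_mem y hx))
        obtain ⟨i, hi⟩ := hs y List.mem_cons_self
        refine ⟨max N (i + 1), fun x hx => ?_⟩
        rcases List.mem_cons.mp hx with rfl | hx
        · exact ⟨i, by omega, hi⟩
        · obtain ⟨i', hi', he⟩ := hN x hx
          exact ⟨i', by omega, he⟩
    obtain ⟨N, hN⟩ := hbound
    obtain ⟨a, ha⟩ := hall N
    refine ⟨a, fun x hx => ?_⟩
    obtain ⟨i, hi, rfl⟩ := hN x hx
    exact ha ⟨i, hi⟩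
  obtain ⟨a, ha⟩ := hsat m S hparam hfin
  exact ⟨a, fun i => ha ⟨k, (φ, b i)⟩ ⟨i, rfl⟩⟩
end

section
/- Let T be any complete theory, A a set of parameters, and p(x) a global type definable over acl(A) (the algebraic closure of A, in T^eq if necessary). Then the restriction p|_A is definable over A. -/
open FirstOrder FirstOrder.Language

namespace Paper

variable {L : Language} {U : Type*} [L.Structure U]

/-- `c` is algebraic over `A` : it satisfies a formula with parameters in `A` having
only finitely many solutions. -/
def InAcl (L : Language) {U : Type*} [L.Structure U] (A : Set U) (c : U) : Prop :=
  ∃ (n : ℕ) (φ : L.Formula (Fin 1 ⊕ Fin n)) (e : Fin n → U), (∀ i, e i ∈ A) ∧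
    Rz (fun _ => c) φ e ∧ {x : U | Rz (L := L) (fun _ => x) φ e}.Finite

end Paper


namespace Paper

variable {L : Language} {U : Type*} [L.Structure U]

/-- A set of `j`-tuples definable with parameters from `A`. -/
def DefA (L : Language) {U : Type*} [L.Structure U] (A : Set U) (j : ℕ)
    (s : Set (Fin j → U)) : Prop :=
  ∃ (r : ℕ) (θ : L.Formula (Fin j ⊕ Fin r)) (e' : Fin r → U),
    (∀ i, e' i ∈ A) ∧ s = {z | θ.Realize (Sum.elim z e')}

lemma defA_univ {A : Set U} {j : ℕ} : DefA L A j Set.univ := by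
  refine ⟨0, ⊤, Fin.elim0, fun i => i.elim0, ?_⟩
  ext z
  simp

lemma defA_inter {A : Set U} {j : ℕ} {s t : Set (Fin j → U)}
    (hs : DefA L A j s) (ht : DefA L A j t) : DefA L A j (s ∩ t) := by
  obtain ⟨r₁, θ₁, e₁, he₁, rfl⟩ := hs
  obtain ⟨r₂, θ₂, e₂, he₂, rfl⟩ := ht
  refine ⟨r₁ + r₂,
    (θ₁.relabel (Sum.map id (Fin.castAdd r₂))) ⊓ (θ₂.relabel (Sum.map id (Fin.natAdd r₁))),
    Fin.append e₁ e₂, ?_, ?_⟩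
  · intro i
    refine Fin.addCases (fun i => ?_) (fun i => ?_) i
    · rw [Fin.append_left]; exact he₁ i
    · rw [Fin.append_right]; exact he₂ i
  · ext z
    have h1 : (Sum.elim z (Fin.append e₁ e₂)) ∘ (Sum.map id (Fin.castAdd r₂))
        = Sum.elim z e₁ := by
      funext x
      rcases x with x | x
      · rfl
      · simp [Fin.append_left]
    have h2 : (Sum.elim z (Fin.append e₁ e₂)) ∘ (Sum.map id (Fin.natAdd r₁))
        = Sum.elim z e₂ := by
      funext x
      rcases x with x | x
      · rfl
      · simp [Fin.append_right]
    simp only [Set.mem_inter_iff, Set.mem_setOf_eq, Formula.realize_inf,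
      Formula.realize_relabel, h1, h2]

lemma defA_biInter {A : Set U} {j : ℕ} {F : Fin j → Set (Fin j → U)}
    (h : ∀ i, DefA L A j (F i)) (s : Finset (Fin j)) :
    DefA L A j (⋂ i ∈ s, F i) := by
  classical
  induction s using Finset.induction_on with
  | empty => simpa using defA_univ
  | insert _ _ hx ih =>
    rw [Finset.set_biInter_insert]
    exact defA_inter (h _) ih

lemma defA_iInter {A : Set U} {j : ℕ} {F : Fin j → Set (Fin j → U)}
    (h : ∀ i, DefA L A j (F i)) : DefA L A j (⋂ i, F i) := by
  have : (⋂ i, F i) = ⋂ i ∈ (Finset.univ : Finset (Fin j)), F i := by simp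
  rw [this]
  exact defA_biInter h _

end Paper

open Paper in
/-- (T any complete theory) If a global type `p` is definable over
`acl(A)`, then its restriction `p|_A` is definable over `A`. -/
theorem stmt_18 {L : Language} {U : Type*} [L.Structure U]
    (A : Set U) (hmon : Monster L U A)
    {m : ℕ} (p : GType L U (Fin m))
    (hdef : DefinableOver {c | InAcl L A c} p) :
    ∀ {n : ℕ} (φ : L.Formula (Fin m ⊕ Fin n)),
      ∃ (j : ℕ) (e : Fin j → U), (∀ i, e i ∈ A) ∧
        ∃ ψ : L.Formula (Fin n ⊕ Fin j), ∀ d : Fin n → U, (∀ i, d i ∈ A) →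
          (p.mem φ d ↔ ψ.Realize (Sum.elim d e)) := by
  
  intro n φ
  classical
  obtain ⟨j, e, heacl, ψ, hψ⟩ := hdef φ
  -- per-coordinate algebraic sets
  choose ni φi ei hei hsat hfin using fun i => heacl i
  set si : Fin j → Set U := fun i => {x : U | Rz (L := L) (fun _ => x) (φi i) (ei i)} with hsi
  -- the lifted coordinate sets are A-definable
  have hT : ∀ i : Fin j, DefA L A j {z : Fin j → U | z i ∈ si i} := by
    intro i
    refine ⟨ni i, (φi i).relabel (Sum.map (fun _ => i) id), ei i, hei i, ?_⟩
    ext z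
    have h1 : (Sum.elim z (ei i)) ∘ (Sum.map (fun _ : Fin 1 => i) id)
        = Sum.elim (fun _ : Fin 1 => z i) (ei i) := by
      funext x
      rcases x with x | x <;> rfl
    simp only [Set.mem_setOf_eq, Formula.realize_relabel, h1]
    rfl
  -- the collection of finite A-definable sets containing e
  set D : Set (Set (Fin j → U)) := {s | DefA L A j s ∧ e ∈ s ∧ s.Finite} with hD
  have hDne : D.Nonempty := by
    refine ⟨⋂ i, {z : Fin j → U | z i ∈ si i}, defA_iInter hT, ?_, ?_⟩
    · simp only [Set.mem_iInter, Set.mem_setOf_eq]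
      exact fun i => hsat i
    · have : (⋂ i, {z : Fin j → U | z i ∈ si i}) = Set.pi Set.univ si := by
        ext z
        simp [Set.mem_pi]
      rw [this]
      exact Set.Finite.pi fun i => hfin i
  -- pick a member of minimal cardinality
  set K : Set ℕ := {k | ∃ s ∈ D, s.ncard = k} with hK
  have hKne : K.Nonempty := ⟨hDne.choose.ncard, hDne.choose, hDne.choose_spec, rfl⟩
  obtain ⟨s₀, hs₀D, hs₀card⟩ := Nat.sInf_mem hKne
  obtain ⟨hs₀def, hes₀, hs₀fin⟩ := hs₀D
  -- minimality: s₀ is contained in every A-definable set containing e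
  have hmin : ∀ t : Set (Fin j → U), DefA L A j t → e ∈ t → s₀ ⊆ t := by
    intro t ht het
    have h1 : (s₀ ∩ t) ∈ D :=
      ⟨defA_inter hs₀def ht, ⟨hes₀, het⟩, hs₀fin.subset Set.inter_subset_left⟩
    have h2 : sInf K ≤ (s₀ ∩ t).ncard := Nat.sInf_le ⟨s₀ ∩ t, h1, rfl⟩
    have h3 : s₀ ∩ t = s₀ := by
      refine Set.eq_of_subset_of_ncard_le Set.inter_subset_left ?_ hs₀fin
      rw [hs₀card]; exact h2
    intro x hx
    rw [← h3] at hx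
    exact hx.2
  obtain ⟨r₀, θ₀, e₀, he₀, hs₀eq⟩ := hs₀def
  -- the final formula : ∃ z, θ₀(z; e₀) ∧ ψ(y, z)
  set g₁ : (Fin j ⊕ Fin r₀) → (Fin n ⊕ Fin r₀) ⊕ Fin j :=
    Sum.elim Sum.inr (fun t => Sum.inl (Sum.inr t)) with hg₁
  set g₂ : (Fin n ⊕ Fin j) → (Fin n ⊕ Fin r₀) ⊕ Fin j :=
    Sum.elim (fun t => Sum.inl (Sum.inl t)) Sum.inr with hg₂
  set χ : L.Formula ((Fin n ⊕ Fin r₀) ⊕ Fin j) := (θ₀.relabel g₁) ⊓ (ψ.relabel g₂) with hχ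
  refine ⟨r₀, e₀, he₀, χ.iExs (Fin j), ?_⟩
  intro d hd
  have hreal : ∀ z : Fin j → U,
      χ.Realize (Sum.elim (Sum.elim d e₀) z)
        ↔ (z ∈ s₀ ∧ ψ.Realize (Sum.elim d z)) := by
    intro z
    have h1 : (Sum.elim (Sum.elim d e₀) z) ∘ g₁ = Sum.elim z e₀ := by
      funext x; rcases x with x | x <;> rfl
    have h2 : (Sum.elim (Sum.elim d e₀) z) ∘ g₂ = Sum.elim d z := by
      funext x; rcases x with x | x <;> rfl
    rw [hχ, Formula.realize_inf, Formula.realize_relabel, Formula.realize_relabel, h1, h2,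
      hs₀eq]
    rfl
  rw [hψ d]
  constructor
  · intro h
    rw [Formula.realize_iExs]
    refine ⟨e, ?_⟩
    have := (hreal e).2 ⟨hes₀, h⟩
    convert this using 2
  · intro h
    rw [Formula.realize_iExs] at h
    obtain ⟨z, hz⟩ := h
    have hz' : χ.Realize (Sum.elim (Sum.elim d e₀) z) := by
      convert hz using 2
    obtain ⟨hzs₀, hzψ⟩ := (hreal z).1 hz'
    by_contra hne
    -- the A-definable set of tuples w with ¬ψ(d, w) contains e, hence s₀, hence z
    have hdefneg : DefA L A j {w : Fin j → U | ¬ ψ.Realize (Sum.elim d w)} := by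
      refine ⟨n, (ψ.relabel (Sum.elim Sum.inr Sum.inl)).not, d, hd, ?_⟩
      ext w
      have h3 : (Sum.elim w d) ∘ (Sum.elim Sum.inr Sum.inl : Fin n ⊕ Fin j → Fin j ⊕ Fin n)
          = Sum.elim d w := by
        funext x; rcases x with x | x <;> rfl
      simp only [Set.mem_setOf_eq, Formula.realize_not, Formula.realize_relabel, h3]
    have := hmin _ hdefneg hne hzs₀
    exact this hzψ
end

section
/- Let T be a theory with definable Skolem functions, M ≺ N models, b a tuple such that tp(b/N) is definable over M, and p ∈ S_x(Mb) a complete type definable over Mb. Then p extends to a complete type q ∈ S_x(Nb) which is definable over Mb using the same definition scheme as p. -/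
open FirstOrder FirstOrder.Language

namespace Paper

variable {L : Language} {U : Type*} [L.Structure U]

/-- A complete type over the parameter set `A` in variables `γ`. -/
structure TypeOver (L : Language) (U : Type*) [L.Structure U] (A : Set U) (γ : Type*) where
  mem : ∀ {n : ℕ}, L.Formula (γ ⊕ Fin n) → (Fin n → U) → Prop
  complete : ∀ {n : ℕ} (φ : L.Formula (γ ⊕ Fin n)) (d : Fin n → U),
    (∀ i, d i ∈ A) → mem φ d ∨ mem φ.not d
  finSat : ∀ (s : List (Σ n : ℕ, L.Formula (γ ⊕ Fin n) × (Fin n → U))),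
    (∀ x ∈ s, (∀ i, x.2.2 i ∈ A) ∧ mem x.2.1 x.2.2) →
    ∃ a : γ → U, ∀ x ∈ s, Rz a x.2.1 x.2.2

/-- The theory has definable Skolem functions : every consistent formula `φ(x;y)` in
one variable `x` admits a `∅`-definable choice of a solution. -/
def HasDefSkolem (L : Language) (U : Type*) [L.Structure U] : Prop :=
  ∀ (n : ℕ) (φ : L.Formula (Fin 1 ⊕ Fin n)),
    ∃ ψ : L.Formula (Fin 1 ⊕ Fin n), ∀ e : Fin n → U,
      (∃ x : U, Rz (L := L) (fun _ => x) φ e) →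
        ∃ x : U, Rz (fun _ => x) ψ e ∧ Rz (fun _ => x) φ e ∧
          ∀ x' : U, Rz (fun _ => x') ψ e → x' = x

end Paper

namespace Stmt19Aux

open FirstOrder FirstOrder.Language Paper

variable {L : Language} {U : Type*} [L.Structure U]

lemma elim_map {V α W : Type*} {kb : ℕ} (b : Fin kb → V) (w : W → V) (ι : α → W)
    (x : Fin kb ⊕ α) : Sum.elim b w (Sum.map id ι x) = Sum.elim b (w ∘ ι) x := by
  cases x <;> rfl

/-- Finite conjunction of a list of formulas. -/
def listInf {α : Type*} : List (L.Formula α) → L.Formula α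
  | [] => ⊤
  | φ :: l => φ ⊓ listInf l

lemma realize_listInf {α : Type*} {l : List (L.Formula α)} {v : α → U} :
    (listInf l).Realize v ↔ ∀ φ ∈ l, φ.Realize v := by
  induction l with
  | nil => simp [listInf]
  | cons φ l ih => simp [listInf, ih]

/-- Existential quantification over the first block of variables. -/
noncomputable def exX {k : ℕ} {β : Type*} (χ : L.Formula (Fin k ⊕ β)) : L.Formula β :=
  (χ.relabel Sum.swap).iExs (Fin k)

lemma realize_exX {k : ℕ} {β : Type*} {χ : L.Formula (Fin k ⊕ β)} {v : β → U} :
    (exX χ).Realize v ↔ ∃ a : Fin k → U, χ.Realize (Sum.elim a v) := by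
  rw [exX, Formula.realize_iExs]
  simp only [Formula.realize_relabel, Function.comp_def]
  refine exists_congr fun a => ?_
  have h : (fun x : Fin k ⊕ β => Sum.elim v a (Sum.swap x)) = Sum.elim a v := by
    funext x; cases x <;> rfl
  rw [h]

open Classical in
/-- For each coordinate of `c`, choose either an index into `b` or a fresh variable. -/
noncomputable def gSig {kb n : ℕ} (P : Set U) (b : Fin kb → U) (c : Fin n → U)
    (hc : ∀ i, c i ∈ P ∪ Set.range b) : Fin n → Fin kb ⊕ Fin n := fun i =>
  if h : c i ∈ P then Sum.inr i
  else Sum.inl (Classical.choose (Set.mem_range.1 ((hc i).resolve_left h)))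

open Classical in
/-- The tuple of `P`-coordinates of `c`, with default `p₀` on `b`-coordinates. -/
noncomputable def gZ {n : ℕ} (P : Set U) (p₀ : U) (c : Fin n → U) : Fin n → U := fun i =>
  if c i ∈ P then c i else p₀

lemma gZ_mem {n : ℕ} {P : Set U} {p₀ : U} (hp : p₀ ∈ P) (c : Fin n → U) (i : Fin n) :
    gZ P p₀ c i ∈ P := by
  unfold gZ; split_ifs with h
  · exact h
  · exact hp

lemma gSig_spec {kb n : ℕ} {P : Set U} {p₀ : U} (b : Fin kb → U) (c : Fin n → U)
    (hc : ∀ i, c i ∈ P ∪ Set.range b) (i : Fin n) :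
    Sum.elim b (gZ P p₀ c) (gSig P b c hc i) = c i := by
  unfold gSig
  split_ifs with h
  · simp only [Sum.elim_inr]; unfold gZ; rw [if_pos h]
  · exact Classical.choose_spec (Set.mem_range.1 ((hc i).resolve_left h))

lemma elim_mem {kb n : ℕ} {P : Set U} (b : Fin kb → U) (z : Fin n → U)
    (hz : ∀ i, z i ∈ P) (x : Fin kb ⊕ Fin n) : Sum.elim b z x ∈ P ∪ Set.range b := by
  cases x with
  | inl t => exact Or.inr ⟨t, rfl⟩
  | inr t => exact Or.inl (hz t)

lemma transfer {kb : ℕ} {M N : L.ElementarySubstructure U}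
    (hMN : (M : Set U) ⊆ (N : Set U)) {b : Fin kb → U}
    (hbdef : ∀ {n : ℕ} (φ : L.Formula (Fin kb ⊕ Fin n)),
      ∃ (j : ℕ) (e : Fin j → U), (∀ i, e i ∈ M) ∧
        ∃ dφ : L.Formula (Fin n ⊕ Fin j), ∀ d : Fin n → U, (∀ i, d i ∈ N) →
          (Rz b φ d ↔ dφ.Realize (Sum.elim d e)))
    {β γ : Type} [Fintype β] [Fintype γ]
    (θ : L.Formula (Fin kb ⊕ (β ⊕ γ))) (zN : β → U) (zM : γ → U)
    (hzN : ∀ i, zN i ∈ (N : Set U)) (hzM : ∀ i, zM i ∈ (M : Set U))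
    (hθ : θ.Realize (Sum.elim b (Sum.elim zN zM))) :
    ∃ zN' : β → U, (∀ i, zN' i ∈ (M : Set U)) ∧
      θ.Realize (Sum.elim b (Sum.elim zN' zM)) := by
  classical
  set e := Fintype.equivFin (β ⊕ γ) with he
  obtain ⟨j, f, hf, dθ, hdθ⟩ := hbdef (θ.relabel (Sum.map id ⇑e))
  have hRz : ∀ z : β → U, (∀ i, z i ∈ (N : Set U)) →
      (θ.Realize (Sum.elim b (Sum.elim z zM)) ↔
        dθ.Realize (Sum.elim (Sum.elim z zM ∘ ⇑e.symm) f)) := by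
    intro z hz
    have hmem : ∀ i, (Sum.elim z zM ∘ ⇑e.symm) i ∈ N := by
      intro i
      rcases h : e.symm i with bb | c
      · simpa [Function.comp, h] using hz bb
      · simpa [Function.comp, h] using hMN (hzM c)
    have h2 := hdθ (Sum.elim z zM ∘ ⇑e.symm) hmem
    unfold Rz at h2
    rw [Formula.realize_relabel] at h2
    have h3 : (Sum.elim b (Sum.elim z zM ∘ ⇑e.symm)) ∘ (Sum.map id ⇑e)
        = Sum.elim b (Sum.elim z zM) := by
      funext x
      cases x with
      | inl t => rfl
      | inr t => simp [Function.comp]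
    rwa [h3] at h2
  have hd1 := (hRz zN hzN).1 hθ
  set g : Fin (Fintype.card (β ⊕ γ)) ⊕ Fin j → (γ ⊕ Fin j) ⊕ β :=
    Sum.elim (fun r => Sum.elim (fun bb => Sum.inr bb)
        (fun c => Sum.inl (Sum.inl c)) (e.symm r))
      (fun t => Sum.inl (Sum.inr t)) with hg
  have hassign : ∀ z : β → U,
      (fun a => Sum.elim (Sum.elim zM f) z (g a)) = Sum.elim (Sum.elim z zM ∘ ⇑e.symm) f := by
    intro z; funext a
    cases a with
    | inl r =>
      rcases h : e.symm r with bb | c <;> simp [hg, h, Function.comp]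
    | inr t => simp [hg]
  have hwmem : ∀ x : γ ⊕ Fin j, Sum.elim zM f x ∈ M := by
    intro x; cases x with
    | inl c => exact hzM c
    | inr t => exact hf t
  set w₀ : γ ⊕ Fin j → M := fun x => ⟨Sum.elim zM f x, hwmem x⟩ with hw₀
  have hcoe : ((↑) : M → U) ∘ w₀ = Sum.elim zM f := rfl
  have hχU : ((dθ.relabel g).iExs β).Realize (Sum.elim zM f) := by
    rw [Formula.realize_iExs]
    exact ⟨zN, by rw [Formula.realize_relabel, Function.comp_def, hassign zN]; exact hd1⟩
  have hχM : ((dθ.relabel g).iExs β).Realize w₀ := by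
    have h4 := M.subtype.map_formula ((dθ.relabel g).iExs β) w₀
    rw [ElementarySubstructure.coe_subtype, hcoe] at h4
    exact h4.1 hχU
  rw [Formula.realize_iExs] at hχM
  obtain ⟨i₀, hi₀⟩ := hχM
  rw [Formula.realize_relabel, Function.comp_def] at hi₀
  refine ⟨fun bb => ↑(i₀ bb), fun bb => (i₀ bb).2, ?_⟩
  have h5 := (M.subtype.map_formula dθ (fun a => Sum.elim w₀ i₀ (g a))).2 hi₀
  rw [ElementarySubstructure.coe_subtype] at h5
  have h6 : (((↑) : M → U) ∘ fun a => Sum.elim w₀ i₀ (g a))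
      = fun a => Sum.elim (Sum.elim zM f) (fun bb => ((i₀ bb : M) : U)) (g a) := by
    funext a
    rcases hga : g a with x | bb <;> simp [Function.comp, hga, hw₀]
  rw [h6, hassign (fun bb => ((i₀ bb : M) : U))] at h5
  exact (hRz _ (fun bb => hMN (i₀ bb).2)).2 h5

end Stmt19Aux

namespace Stmt19Aux
open FirstOrder FirstOrder.Language Paper

variable {L : Language} {U : Type*} [L.Structure U]

lemma aux_complete {kb kx : ℕ} {M N : L.ElementarySubstructure U}
    (hMN : (M : Set U) ⊆ (N : Set U)) {b : Fin kb → U}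
    (hbdef : ∀ {n : ℕ} (φ : L.Formula (Fin kb ⊕ Fin n)),
      ∃ (j : ℕ) (e : Fin j → U), (∀ i, e i ∈ M) ∧
        ∃ dφ : L.Formula (Fin n ⊕ Fin j), ∀ d : Fin n → U, (∀ i, d i ∈ N) →
          (Rz b φ d ↔ dφ.Realize (Sum.elim d e)))
    (p : TypeOver L U ((M : Set U) ∪ Set.range b) (Fin kx))
    (D : ∀ {n : ℕ}, L.Formula (Fin kx ⊕ Fin n) →
      (Σ j : ℕ, L.Formula (Fin n ⊕ Fin j) × (Fin j → U)))
    (hD : ∀ {n : ℕ} (φ : L.Formula (Fin kx ⊕ Fin n)) (i : Fin (D φ).1),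
      (D φ).2.2 i ∈ (M : Set U) ∪ Set.range b)
    (hDp : ∀ {n : ℕ} (φ : L.Formula (Fin kx ⊕ Fin n)) (d : Fin n → U),
      (∀ i, d i ∈ ((M : Set U) ∪ Set.range b)) →
      (p.mem φ d ↔ (D φ).2.1.Realize (Sum.elim d (D φ).2.2)))
    (hMne : (M : Set U).Nonempty)
    {n : ℕ} (φ : L.Formula (Fin kx ⊕ Fin n)) (d : Fin n → U)
    (hd : ∀ i, d i ∈ (N : Set U) ∪ Set.range b) :
    (D φ).2.1.Realize (Sum.elim d (D φ).2.2) ∨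
      (D φ.not).2.1.Realize (Sum.elim d (D φ.not).2.2) := by
  classical
  by_contra hcon
  rw [not_or] at hcon
  obtain ⟨h1, h2⟩ := hcon
  obtain ⟨m₀, hm₀⟩ := hMne
  have hm₀N : m₀ ∈ (N : Set U) := hMN hm₀
  set σd := gSig (N : Set U) b d hd with hσd
  set zd := gZ (N : Set U) m₀ d with hzdd
  set σ1 := gSig (M : Set U) b (D φ).2.2 (hD φ) with hσ1
  set z1 := gZ (M : Set U) m₀ (D φ).2.2 with hz1
  set σ2 := gSig (M : Set U) b (D φ.not).2.2 (hD φ.not) with hσ2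
  set z2 := gZ (M : Set U) m₀ (D φ.not).2.2 with hz2
  set g1 : Fin n ⊕ Fin (D φ).1 → Fin kb ⊕ (Fin n ⊕ (Fin (D φ).1 ⊕ Fin (D φ.not).1)) :=
    Sum.elim (fun t => Sum.map id Sum.inl (σd t))
      (fun t => Sum.map id (fun s => Sum.inr (Sum.inl s)) (σ1 t)) with hg1
  set g2 : Fin n ⊕ Fin (D φ.not).1 → Fin kb ⊕ (Fin n ⊕ (Fin (D φ).1 ⊕ Fin (D φ.not).1)) :=
    Sum.elim (fun t => Sum.map id Sum.inl (σd t))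
      (fun t => Sum.map id (fun s => Sum.inr (Sum.inr s)) (σ2 t)) with hg2
  set θ := (((D φ).2.1.relabel g1) ⊔ ((D φ.not).2.1.relabel g2)).not with hθdef
  have key : ∀ zf : Fin n → U,
      (θ.Realize (Sum.elim b (Sum.elim zf (Sum.elim z1 z2))) ↔
        ¬((D φ).2.1.Realize (Sum.elim (fun i => Sum.elim b zf (σd i))
            (fun s => Sum.elim b z1 (σ1 s))) ∨
          (D φ.not).2.1.Realize (Sum.elim (fun i => Sum.elim b zf (σd i))
            (fun s => Sum.elim b z2 (σ2 s))))) := by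
    intro zf
    have e1 : Sum.elim b (Sum.elim zf (Sum.elim z1 z2)) ∘ g1
        = Sum.elim (fun i => Sum.elim b zf (σd i)) (fun s => Sum.elim b z1 (σ1 s)) := by
      funext t
      rcases t with i | s <;>
        simp only [hg1, Function.comp_apply, Sum.elim_inl, Sum.elim_inr, elim_map] <;> rfl
    have e2 : Sum.elim b (Sum.elim zf (Sum.elim z1 z2)) ∘ g2
        = Sum.elim (fun i => Sum.elim b zf (σd i)) (fun s => Sum.elim b z2 (σ2 s)) := by
      funext t
      rcases t with i | s <;>
        simp only [hg2, Function.comp_apply, Sum.elim_inl, Sum.elim_inr, elim_map] <;> rfl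
    rw [hθdef, Formula.realize_not, Formula.realize_sup, Formula.realize_relabel,
      Formula.realize_relabel, e1, e2]
  have hds : (fun i => Sum.elim b zd (σd i)) = d := funext fun i => gSig_spec b d hd i
  have hes1 : (fun s => Sum.elim b z1 (σ1 s)) = (D φ).2.2 :=
    funext fun s => gSig_spec b (D φ).2.2 (hD φ) s
  have hes2 : (fun s => Sum.elim b z2 (σ2 s)) = (D φ.not).2.2 :=
    funext fun s => gSig_spec b (D φ.not).2.2 (hD φ.not) s
  have hθ0 : θ.Realize (Sum.elim b (Sum.elim zd (Sum.elim z1 z2))) := by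
    rw [key zd, hds, hes1, hes2]
    exact fun h => h.elim h1 h2
  obtain ⟨zN', hzN', hθ1⟩ := transfer hMN hbdef θ zd (Sum.elim z1 z2)
    (fun i => gZ_mem hm₀N d i)
    (fun i => by
      rcases i with s | s
      · exact gZ_mem hm₀ (D φ).2.2 s
      · exact gZ_mem hm₀ (D φ.not).2.2 s)
    hθ0
  rw [key zN', hes1, hes2] at hθ1
  set d' : Fin n → U := fun i => Sum.elim b zN' (σd i) with hd'
  have hd'mem : ∀ i, d' i ∈ (M : Set U) ∪ Set.range b :=
    fun i => elim_mem b zN' hzN' (σd i)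
  rcases p.complete φ d' hd'mem with h | h
  · exact hθ1 (Or.inl ((hDp φ d' hd'mem).1 h))
  · exact hθ1 (Or.inr ((hDp φ.not d' hd'mem).1 h))

lemma aux_finSat {kb kx : ℕ} {M N : L.ElementarySubstructure U}
    (hMN : (M : Set U) ⊆ (N : Set U)) {b : Fin kb → U}
    (hbdef : ∀ {n : ℕ} (φ : L.Formula (Fin kb ⊕ Fin n)),
      ∃ (j : ℕ) (e : Fin j → U), (∀ i, e i ∈ M) ∧
        ∃ dφ : L.Formula (Fin n ⊕ Fin j), ∀ d : Fin n → U, (∀ i, d i ∈ N) →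
          (Rz b φ d ↔ dφ.Realize (Sum.elim d e)))
    (p : TypeOver L U ((M : Set U) ∪ Set.range b) (Fin kx))
    (D : ∀ {n : ℕ}, L.Formula (Fin kx ⊕ Fin n) →
      (Σ j : ℕ, L.Formula (Fin n ⊕ Fin j) × (Fin j → U)))
    (hD : ∀ {n : ℕ} (φ : L.Formula (Fin kx ⊕ Fin n)) (i : Fin (D φ).1),
      (D φ).2.2 i ∈ (M : Set U) ∪ Set.range b)
    (hDp : ∀ {n : ℕ} (φ : L.Formula (Fin kx ⊕ Fin n)) (d : Fin n → U),
      (∀ i, d i ∈ ((M : Set U) ∪ Set.range b)) →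
      (p.mem φ d ↔ (D φ).2.1.Realize (Sum.elim d (D φ).2.2)))
    (hMne : (M : Set U).Nonempty)
    {ℓ : ℕ} (ni : Fin ℓ → ℕ) (φs : ∀ i, L.Formula (Fin kx ⊕ Fin (ni i)))
    (ds : ∀ i, Fin (ni i) → U)
    (hds : ∀ i t, ds i t ∈ (N : Set U) ∪ Set.range b)
    (hq : ∀ i, (D (φs i)).2.1.Realize (Sum.elim (ds i) (D (φs i)).2.2)) :
    ∃ a : Fin kx → U, ∀ i, Rz a (φs i) (ds i) := by
  classical
  obtain ⟨m₀, hm₀⟩ := hMne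
  have hm₀N : m₀ ∈ (N : Set U) := hMN hm₀
  by_contra hcon
  push_neg at hcon
  set σd : ∀ i, Fin (ni i) → Fin kb ⊕ Fin (ni i) :=
    fun i => gSig (N : Set U) b (ds i) (hds i) with hσd
  set zd : ∀ i, Fin (ni i) → U := fun i => gZ (N : Set U) m₀ (ds i) with hzdd
  set σe : ∀ i, Fin ((D (φs i)).1) → Fin kb ⊕ Fin ((D (φs i)).1) :=
    fun i => gSig (M : Set U) b (D (φs i)).2.2 (hD (φs i)) with hσe
  set ze : ∀ i, Fin ((D (φs i)).1) → U :=
    fun i => gZ (M : Set U) m₀ (D (φs i)).2.2 with hze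
  set zM : ((i : Fin ℓ) × Fin ((D (φs i)).1)) → U := fun x => ze x.1 x.2 with hzM
  set g : ∀ i, (Fin (ni i) ⊕ Fin ((D (φs i)).1)) →
      Fin kb ⊕ (((i : Fin ℓ) × Fin (ni i)) ⊕ ((i : Fin ℓ) × Fin ((D (φs i)).1))) := fun i =>
    Sum.elim (fun t => Sum.map id (fun t' => Sum.inl ⟨i, t'⟩) (σd i t))
      (fun t => Sum.map id (fun t' => Sum.inr ⟨i, t'⟩) (σe i t)) with hgdef
  set transψ : Fin ℓ →
      L.Formula (Fin kb ⊕ (((i : Fin ℓ) × Fin (ni i)) ⊕ ((i : Fin ℓ) × Fin ((D (φs i)).1)))) :=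
    fun i => (D (φs i)).2.1.relabel (g i) with htransψ
  set transφ : Fin ℓ →
      L.Formula (Fin kx ⊕ (Fin kb ⊕
        (((i : Fin ℓ) × Fin (ni i)) ⊕ ((i : Fin ℓ) × Fin ((D (φs i)).1))))) :=
    fun i => (φs i).relabel (Sum.map id (fun t => g i (Sum.inl t))) with htransφ
  set θ := (listInf (List.ofFn transψ)) ⊓ (exX (listInf (List.ofFn transφ))).not with hθdef
  have compψ : ∀ (zf : ∀ i, Fin (ni i) → U) (i : Fin ℓ),
      ((transψ i).Realize (Sum.elim b (Sum.elim (fun x => zf x.1 x.2) zM)) ↔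
        (D (φs i)).2.1.Realize (Sum.elim (fun t => Sum.elim b (zf i) (σd i t))
          (fun t => Sum.elim b (ze i) (σe i t)))) := by
    intro zf i
    rw [htransψ, Formula.realize_relabel]
    have hx : Sum.elim b (Sum.elim (fun x => zf x.1 x.2) zM) ∘ (g i)
        = Sum.elim (fun t => Sum.elim b (zf i) (σd i t))
          (fun t => Sum.elim b (ze i) (σe i t)) := by
      funext t
      rcases t with t | t <;>
        simp only [hgdef, Function.comp_apply, Sum.elim_inl, Sum.elim_inr, elim_map] <;> rfl
    rw [hx]
  have compφ : ∀ (zf : ∀ i, Fin (ni i) → U) (a : Fin kx → U) (i : Fin ℓ),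
      ((transφ i).Realize (Sum.elim a (Sum.elim b (Sum.elim (fun x => zf x.1 x.2) zM))) ↔
        (φs i).Realize (Sum.elim a (fun t => Sum.elim b (zf i) (σd i t)))) := by
    intro zf a i
    rw [htransφ, Formula.realize_relabel]
    have hx : Sum.elim a (Sum.elim b (Sum.elim (fun x => zf x.1 x.2) zM)) ∘
        (Sum.map id (fun t => g i (Sum.inl t)))
        = Sum.elim a (fun t => Sum.elim b (zf i) (σd i t)) := by
      funext t
      rcases t with t | t
      · rfl
      · simp only [hgdef, Function.comp_apply, Sum.map_inr, Sum.elim_inr, Sum.elim_inl, elim_map]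
        rfl
    rw [hx]
  have hdseq : ∀ i, (fun t => Sum.elim b (zd i) (σd i t)) = ds i :=
    fun i => funext fun t => gSig_spec b (ds i) (hds i) t
  have heseq : ∀ i, (fun t => Sum.elim b (ze i) (σe i t)) = (D (φs i)).2.2 :=
    fun i => funext fun t => gSig_spec b (D (φs i)).2.2 (hD (φs i)) t
  have hθ0 : θ.Realize (Sum.elim b (Sum.elim (fun x => zd x.1 x.2) zM)) := by
    rw [hθdef, Formula.realize_inf]
    constructor
    · rw [realize_listInf]
      intro χ hχ
      rw [List.mem_ofFn] at hχ
      obtain ⟨i, rfl⟩ := hχ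
      rw [compψ zd i, hdseq i, heseq i]
      exact hq i
    · rw [Formula.realize_not, realize_exX]
      rintro ⟨a, ha⟩
      rw [realize_listInf] at ha
      obtain ⟨i, hni⟩ := hcon a
      refine hni ?_
      have h := ha (transφ i) (List.mem_ofFn.2 ⟨i, rfl⟩)
      rw [compφ zd a i, hdseq i] at h
      exact h
  obtain ⟨zN', hzN', hθ1⟩ := transfer hMN hbdef θ (fun x => zd x.1 x.2) zM
    (fun x => gZ_mem hm₀N (ds x.1) x.2)
    (fun x => gZ_mem hm₀ (D (φs x.1)).2.2 x.2)
    hθ0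
  have hθ1' : θ.Realize (Sum.elim b (Sum.elim (fun x => (fun i t => zN' ⟨i, t⟩) x.1 x.2) zM)) :=
    hθ1
  rw [hθdef, Formula.realize_inf] at hθ1'
  obtain ⟨hc1, hc2⟩ := hθ1'
  rw [realize_listInf] at hc1
  rw [Formula.realize_not, realize_exX] at hc2
  set d' : ∀ i, Fin (ni i) → U :=
    fun i t => Sum.elim b (fun t' => zN' ⟨i, t'⟩) (σd i t) with hd'
  have hd'mem : ∀ i t, d' i t ∈ (M : Set U) ∪ Set.range b :=
    fun i t => elim_mem b (fun t' => zN' ⟨i, t'⟩) (fun t' => hzN' ⟨i, t'⟩) (σd i t)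
  have hpmem : ∀ i, p.mem (φs i) (d' i) := by
    intro i
    refine (hDp (φs i) (d' i) (hd'mem i)).2 ?_
    have h := hc1 (transψ i) (List.mem_ofFn.2 ⟨i, rfl⟩)
    rw [compψ (fun i t => zN' ⟨i, t⟩) i, heseq i] at h
    exact h
  obtain ⟨a, ha⟩ := p.finSat
    (List.ofFn (fun i : Fin ℓ =>
      (⟨ni i, φs i, d' i⟩ : Σ m : ℕ, L.Formula (Fin kx ⊕ Fin m) × (Fin m → U))))
    (by
      intro x hx
      rw [List.mem_ofFn] at hx
      obtain ⟨i, rfl⟩ := hx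
      exact ⟨hd'mem i, hpmem i⟩)
  refine hc2 ⟨a, ?_⟩
  rw [realize_listInf]
  intro χ hχ
  rw [List.mem_ofFn] at hχ
  obtain ⟨i, rfl⟩ := hχ
  rw [compφ (fun i t => zN' ⟨i, t⟩) a i]
  exact ha _ (List.mem_ofFn.2 ⟨i, rfl⟩)

end Stmt19Aux


open Paper in
/-- (T with definable Skolem functions) Let `M ≺ N`, `b` a tuple with
`tp(b/N)` definable over `M`, and `p ∈ S_x(Mb)` a complete type definable over `Mb` via
the scheme `D`. Then `p` extends to a complete type `q ∈ S_x(Nb)` definable over `Mb`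
by the same scheme `D`. -/
theorem stmt_19 {L : Language} {U : Type*} [L.Structure U]
    (hsk : HasDefSkolem L U)
    (M N : L.ElementarySubstructure U) (hMN : (M : Set U) ⊆ (N : Set U))
    {kb kx : ℕ} (b : Fin kb → U)
    (hbdef : ∀ {n : ℕ} (φ : L.Formula (Fin kb ⊕ Fin n)),
      ∃ (j : ℕ) (e : Fin j → U), (∀ i, e i ∈ M) ∧
        ∃ dφ : L.Formula (Fin n ⊕ Fin j), ∀ d : Fin n → U, (∀ i, d i ∈ N) →
          (Rz b φ d ↔ dφ.Realize (Sum.elim d e)))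
    (p : TypeOver L U ((M : Set U) ∪ Set.range b) (Fin kx))
    (D : ∀ {n : ℕ}, L.Formula (Fin kx ⊕ Fin n) →
      (Σ j : ℕ, L.Formula (Fin n ⊕ Fin j) × (Fin j → U)))
    (hD : ∀ {n : ℕ} (φ : L.Formula (Fin kx ⊕ Fin n)) (i : Fin (D φ).1),
      (D φ).2.2 i ∈ (M : Set U) ∪ Set.range b)
    (hDp : ∀ {n : ℕ} (φ : L.Formula (Fin kx ⊕ Fin n)) (d : Fin n → U),
      (∀ i, d i ∈ ((M : Set U) ∪ Set.range b)) →
      (p.mem φ d ↔ (D φ).2.1.Realize (Sum.elim d (D φ).2.2))) :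
    ∃ q : TypeOver L U ((N : Set U) ∪ Set.range b) (Fin kx),
      (∀ {n : ℕ} (φ : L.Formula (Fin kx ⊕ Fin n)) (d : Fin n → U),
        (∀ i, d i ∈ ((M : Set U) ∪ Set.range b)) → (p.mem φ d ↔ q.mem φ d)) ∧
      (∀ {n : ℕ} (φ : L.Formula (Fin kx ⊕ Fin n)) (d : Fin n → U),
        (∀ i, d i ∈ ((N : Set U) ∪ Set.range b)) →
        (q.mem φ d ↔ (D φ).2.1.Realize (Sum.elim d (D φ).2.2))) := by
  classical
  by_cases hM : (M : Set U).Nonempty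
  · refine ⟨⟨fun {n} φ d => (D φ).2.1.Realize (Sum.elim d (D φ).2.2),
      fun {n} φ d hd => Stmt19Aux.aux_complete hMN hbdef p D hD hDp hM φ d hd,
      fun s hs => ?_⟩,
      fun {n} φ d hd => hDp φ d hd,
      fun {n} φ d _ => Iff.rfl⟩
    obtain ⟨a, ha⟩ := Stmt19Aux.aux_finSat hMN hbdef p D hD hDp hM
      (fun i => (s.get i).1) (fun i => (s.get i).2.1) (fun i => (s.get i).2.2)
      (fun i t => (hs (s.get i) (List.get_mem s i)).1 t)
      (fun i => (hs (s.get i) (List.get_mem s i)).2)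
    refine ⟨a, fun x hx => ?_⟩
    obtain ⟨i, rfl⟩ := List.mem_iff_get.1 hx
    exact ha i
  · have hUe : ∀ u : U, False := by
      intro u
      haveI : Nonempty U := ⟨u⟩
      obtain ⟨x⟩ := (inferInstance : Nonempty M)
      exact hM ⟨x, x.2⟩
    refine ⟨⟨fun {n} φ d => (D φ).2.1.Realize (Sum.elim d (D φ).2.2),
      fun {n} φ d hd => ?_, fun s hs => ?_⟩,
      fun {n} φ d hd => hDp φ d hd,
      fun {n} φ d _ => Iff.rfl⟩
    · have hd' : ∀ i, d i ∈ (M : Set U) ∪ Set.range b := fun i => (hUe (d i)).elim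
      rcases p.complete φ d hd' with h | h
      · exact Or.inl ((hDp φ d hd').1 h)
      · exact Or.inr ((hDp φ.not d hd').1 h)
    · exact p.finSat s (fun x hx =>
        ⟨fun i => (hUe (x.2.2 i)).elim, (hDp x.2.1 x.2.2 (fun i => (hUe (x.2.2 i)).elim)).2 (hs x hx).2⟩)
end
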